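/- arXiv:1706.06058 — 5 statements merged into one kernel-verified Lean document; each statement's English description precedes it below -/
import Mathlib

section
/- Let d > 0 and s ∈ ℝ. For every multi-index α ∈ ℕⁿ and every j ∈ ℕ there exists a constant C > 0 such that for all ξ ∈ ℝⁿ and τ ∈ ℝ, |∂_ξ^α ∂_τ^j ( (⟨ξ⟩^{2d}+τ²)^{s/(2d)} )| ≤ C (⟨ξ⟩^{2d-|α|} + {ξ,τ}^{2d-|α|}) {ξ,τ}^{s-2d-dj}. In other words, the function {ξ,τ}^s satisfies the anisotropic symbol estimates of order m = s with regularity number ν = 2d. -/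
/-- Iterated directional derivative: `dLine [v₁, …, v_k] f` is
`∂_{v₁} ⋯ ∂_{v_k} f` (each derivative taken via `fderiv ℝ`). -/
noncomputable def dLine {E F : Type*} [NormedAddCommGroup E] [NormedSpace ℝ E]
    [NormedAddCommGroup F] [NormedSpace ℝ F] :
    List E → (E → F) → (E → F)
  | [], f => f
  | v :: L, f => fun x => fderiv ℝ (dLine L f) x v

/-- `⟨ξ⟩ = (1 + |ξ|²)^{1/2}`. -/
noncomputable def jap {n : ℕ} (ξ : EuclideanSpace ℝ (Fin n)) : ℝ :=
  (1 + ‖ξ‖ ^ 2) ^ ((1 : ℝ) / 2)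

/-- `{ξ,τ} = (⟨ξ⟩^{2d} + τ²)^{1/(2d)}`. -/
noncomputable def kap {n : ℕ} (d : ℝ) (ξ : EuclideanSpace ℝ (Fin n)) (τ : ℝ) : ℝ :=
  (jap ξ ^ (2 * d) + τ ^ 2) ^ (1 / (2 * d))

open Finset ContinuousLinearMap
variable {n : ℕ}

noncomputable section

structure Tm (n : ℕ) where
  c : ℝ
  β : Fin n → ℕ
  b : ℕ
  e : ℝ
  g : ℝ

def uf (p : EuclideanSpace ℝ (Fin n) × ℝ) : ℝ := 1 + ∑ i, (p.1 i)^2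
def wf (d : ℝ) (p : EuclideanSpace ℝ (Fin n) × ℝ) : ℝ := uf p ^ d + p.2^2

lemma one_le_uf (p : EuclideanSpace ℝ (Fin n) × ℝ) : 1 ≤ uf p := by
  have : (0:ℝ) ≤ ∑ i, (p.1 i)^2 := Finset.sum_nonneg fun i _ => sq_nonneg _
  simp [uf]; linarith

lemma uf_pos (p : EuclideanSpace ℝ (Fin n) × ℝ) : 0 < uf p := lt_of_lt_of_le one_pos (one_le_uf p)

lemma one_le_ufd {d : ℝ} (hd : 0 < d) (p : EuclideanSpace ℝ (Fin n) × ℝ) : 1 ≤ uf p ^ d :=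
  Real.one_le_rpow (one_le_uf p) hd.le

lemma one_le_wf {d : ℝ} (hd : 0 < d) (p : EuclideanSpace ℝ (Fin n) × ℝ) : 1 ≤ wf d p := by
  have := one_le_ufd hd p
  have := sq_nonneg p.2
  simp only [wf]; nlinarith

lemma wf_pos {d : ℝ} (hd : 0 < d) (p : EuclideanSpace ℝ (Fin n) × ℝ) : 0 < wf d p :=
  lt_of_lt_of_le one_pos (one_le_wf hd p)

lemma ufd_le_wf {d : ℝ} (p : EuclideanSpace ℝ (Fin n) × ℝ) : uf p ^ d ≤ wf d p := by
  have := sq_nonneg p.2; simp only [wf]; linarith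

def Tm.f (d : ℝ) (T : Tm n) (p : EuclideanSpace ℝ (Fin n) × ℝ) : ℝ :=
  T.c * (∏ i, (p.1 i)^(T.β i)) * p.2^T.b * uf p ^ T.e * wf d p ^ T.g

def Tm.dXi (d : ℝ) (T : Tm n) (i : Fin n) : List (Tm n) :=
  [⟨T.c * T.β i, Function.update T.β i (T.β i - 1), T.b, T.e, T.g⟩,
   ⟨2 * T.c * T.e, Function.update T.β i (T.β i + 1), T.b, T.e - 1, T.g⟩,
   ⟨2 * T.c * T.g * d, Function.update T.β i (T.β i + 1), T.b, T.e + d - 1, T.g - 1⟩]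

def Tm.dTau (T : Tm n) : List (Tm n) :=
  [⟨T.c * T.b, T.β, T.b - 1, T.e, T.g⟩,
   ⟨2 * T.c * T.g, T.β, T.b + 1, T.e, T.g - 1⟩]

def sumF (d : ℝ) (L : List (Tm n)) (p : EuclideanSpace ℝ (Fin n) × ℝ) : ℝ :=
  (L.map fun T => T.f d p).sum

def Pj (i : Fin n) : (EuclideanSpace ℝ (Fin n) × ℝ) →L[ℝ] ℝ :=
  (EuclideanSpace.proj i).comp (fst ℝ (EuclideanSpace ℝ (Fin n)) ℝ)
def Qm (n : ℕ) : (EuclideanSpace ℝ (Fin n) × ℝ) →L[ℝ] ℝ := snd ℝ (EuclideanSpace ℝ (Fin n)) ℝ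

lemma hproj (i : Fin n) (p : EuclideanSpace ℝ (Fin n) × ℝ) :
    HasFDerivAt (fun q : EuclideanSpace ℝ (Fin n) × ℝ => q.1 i) (Pj i) p :=
  (Pj i).hasFDerivAt

lemma pow' {E : Type*} [NormedAddCommGroup E] [NormedSpace ℝ E] {f : E → ℝ}
    {f' : E →L[ℝ] ℝ} {x : E} (hf : HasFDerivAt f f' x) (m : ℕ) :
    HasFDerivAt (fun y => f y ^ m) (((m : ℝ) * f x ^ (m - 1)) • f') x :=
  (hasDerivAt_pow m (f x)).comp_hasFDerivAt x hf

lemma Tm.hasFD {d : ℝ} (hd : 0 < d) (T : Tm n) (p : EuclideanSpace ℝ (Fin n) × ℝ) :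
    ∃ L : (EuclideanSpace ℝ (Fin n) × ℝ) →L[ℝ] ℝ, HasFDerivAt (T.f d) L p ∧
      (∀ i₀ : Fin n, L ((EuclideanSpace.single i₀ 1 : EuclideanSpace ℝ (Fin n)), (0:ℝ))
          = sumF d (T.dXi d i₀) p) ∧
      L ((0 : EuclideanSpace ℝ (Fin n)), (1:ℝ)) = sumF d T.dTau p := by
  classical
  have hmon : HasFDerivAt (fun q : EuclideanSpace ℝ (Fin n) × ℝ => ∏ i, (q.1 i)^(T.β i))
      (∑ i, (∏ j ∈ univ.erase i, (p.1 j)^(T.β j)) • (((T.β i : ℝ) * (p.1 i)^(T.β i - 1)) • Pj i)) p :=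
    HasFDerivAt.finset_prod (fun i _ => pow' (hproj i p) (T.β i))
  have hτ : HasFDerivAt (fun q : EuclideanSpace ℝ (Fin n) × ℝ => q.2 ^ T.b)
      (((T.b : ℝ) * p.2 ^ (T.b - 1)) • Qm n) p := pow' (Qm n).hasFDerivAt T.b
  have hu : HasFDerivAt (uf (n := n)) (∑ i, (((2:ℕ) : ℝ) * p.1 i ^ (2-1)) • Pj i) p :=
    (HasFDerivAt.fun_sum fun i _ => pow' (hproj i p) 2).const_add 1
  have hue : HasFDerivAt (fun q => uf q ^ T.e)
      ((T.e * uf p ^ (T.e - 1)) • ∑ i, (((2:ℕ) : ℝ) * p.1 i ^ (2-1)) • Pj i) p :=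
    hu.rpow_const (Or.inl (uf_pos p).ne')
  have hw : HasFDerivAt (wf (n := n) d)
      (((d * uf p ^ (d - 1)) • ∑ i, (((2:ℕ) : ℝ) * p.1 i ^ (2-1)) • Pj i)
        + (((2:ℕ) : ℝ) * p.2 ^ (2-1)) • Qm n) p :=
    (hu.rpow_const (Or.inl (uf_pos p).ne')).add (pow' (Qm n).hasFDerivAt 2)
  have hwg : HasFDerivAt (fun q => wf d q ^ T.g)
      ((T.g * wf d p ^ (T.g - 1)) • (((d * uf p ^ (d - 1)) • ∑ i, (((2:ℕ) : ℝ) * p.1 i ^ (2-1)) • Pj i)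
        + (((2:ℕ) : ℝ) * p.2 ^ (2-1)) • Qm n)) p :=
    hw.rpow_const (Or.inl (wf_pos hd p).ne')
  have hbig := (((hmon.const_mul T.c).mul hτ).mul hue).mul hwg
  refine ⟨_, hbig, ?_, ?_⟩
  · intro i₀
    simp only [ContinuousLinearMap.add_apply, ContinuousLinearMap.coe_smul', Pi.smul_apply,
      ContinuousLinearMap.sum_apply, smul_eq_mul, Pj, Qm, ContinuousLinearMap.coe_comp',
      Function.comp_apply, ContinuousLinearMap.coe_fst', ContinuousLinearMap.coe_snd', Pi.mul_apply,
      PiLp.proj_apply, EuclideanSpace.single_apply, mul_ite, mul_one, mul_zero,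
      Finset.sum_ite_eq, Finset.sum_ite_eq', Finset.mem_univ, if_true, pow_one, Nat.cast_ofNat]
    have hsplit : ∏ j, p.1 j ^ T.β j = p.1 i₀ ^ T.β i₀ * ∏ j ∈ univ.erase i₀, p.1 j ^ T.β j :=
      (Finset.mul_prod_erase univ _ (mem_univ i₀)).symm
    have hupd : ∀ m : ℕ, ∏ j, p.1 j ^ (Function.update T.β i₀ m j)
        = p.1 i₀ ^ m * ∏ j ∈ univ.erase i₀, p.1 j ^ T.β j := by
      intro m
      rw [← Finset.mul_prod_erase univ _ (mem_univ i₀), Function.update_self]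
      congr 1
      refine Finset.prod_congr rfl fun j hj => ?_
      rw [Function.update_of_ne (Finset.ne_of_mem_erase hj)]
    have hre : uf p ^ (T.e + d - 1) = uf p ^ T.e * uf p ^ (d - 1) := by
      rw [← Real.rpow_add (uf_pos p)]; ring_nf
    simp only [sumF, Tm.dXi, Tm.f, List.map_cons, List.map_nil, List.sum_cons, List.sum_nil,
      hupd, hre, pow_succ, hsplit]
    ring
  · simp only [ContinuousLinearMap.add_apply, ContinuousLinearMap.coe_smul', Pi.smul_apply,
      ContinuousLinearMap.sum_apply, smul_eq_mul, Pj, Qm, ContinuousLinearMap.coe_comp',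
      Function.comp_apply, ContinuousLinearMap.coe_fst', ContinuousLinearMap.coe_snd', Pi.mul_apply,
      PiLp.proj_apply, mul_zero, mul_one, pow_one, Nat.cast_ofNat]
    have hz : ∀ i : Fin n, (0 : EuclideanSpace ℝ (Fin n)) i = 0 := fun i => rfl
    simp only [hz, mul_zero, zero_mul, Finset.sum_const_zero, add_zero, zero_add]
    simp only [sumF, Tm.dTau, Tm.f, List.map_cons, List.map_nil, List.sum_cons, List.sum_nil,
      pow_succ]
    ring

def Tm.deg (T : Tm n) : ℕ := ∑ i, T.β i

def TInv (d s : ℝ) (k j : ℕ) (T : Tm n) : Prop :=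
  T.c = 0 ∨ ∃ r : ℕ,
    ((T.deg : ℝ) + 2*T.e = 2*d*r - k) ∧
    ((T.b : ℝ) + 2*T.g = (s - d*j)/d - 2*r) ∧
    (k = 0 → (∀ i, T.β i = 0) ∧ T.e = 0 ∧ r = 0) ∧
    (k ≠ 0 → 1 ≤ r)

lemma sum_update_core (β : Fin n → ℕ) (i₀ : Fin n) (m : ℕ) :
    (∑ i, Function.update β i₀ m i) = m + ∑ i ∈ univ.erase i₀, β i := by
  classical
  rw [← Finset.add_sum_erase univ _ (mem_univ i₀), Function.update_self]
  congr 1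
  exact Finset.sum_congr rfl fun i hi => by
    rw [Function.update_of_ne (Finset.ne_of_mem_erase hi)]

lemma sum_split (β : Fin n → ℕ) (i₀ : Fin n) :
    (∑ i, β i) = β i₀ + ∑ i ∈ univ.erase i₀, β i :=
  (Finset.add_sum_erase univ _ (mem_univ i₀)).symm

lemma inv_dXi {d s : ℝ} (hd : 0 < d) {k j : ℕ} {T : Tm n} (hT : TInv d s k j T) (i₀ : Fin n) :
    ∀ T' ∈ T.dXi d i₀, TInv d s (k+1) j T' := by
  intro T' hT'
  simp only [Tm.dXi, List.mem_cons, List.not_mem_nil, or_false] at hT'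
  rcases hT with hc | ⟨r, h1, h2, h0, h1r⟩
  · rcases hT' with rfl | rfl | rfl <;> exact Or.inl (by simp [hc])
  have hs := sum_split T.β i₀
  simp only [Tm.deg] at h1
  rcases hT' with rfl | rfl | rfl
  · -- T1
    by_cases hβ : T.β i₀ = 0
    · exact Or.inl (by simp [hβ])
    refine Or.inr ⟨r, ?_, h2, fun h => absurd h (Nat.succ_ne_zero k), fun _ => ?_⟩
    · dsimp only [Tm.deg]
      rw [sum_update_core]
      rw [hs] at h1
      have hb1 : (1:ℕ) ≤ T.β i₀ := Nat.one_le_iff_ne_zero.mpr hβ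
      push_cast [Nat.cast_sub hb1] at h1 ⊢
      linarith
    · rcases Nat.eq_zero_or_pos k with hk | hk
      · exact absurd ((h0 hk).1 i₀) hβ
      · exact h1r (Nat.pos_iff_ne_zero.mp hk)
  · -- T2
    by_cases he : T.e = 0
    · exact Or.inl (by simp [he])
    refine Or.inr ⟨r, ?_, h2, fun h => absurd h (Nat.succ_ne_zero k), fun _ => ?_⟩
    · dsimp only [Tm.deg]
      rw [sum_update_core]
      rw [hs] at h1
      push_cast at h1 ⊢
      linarith
    · rcases Nat.eq_zero_or_pos k with hk | hk
      · exact absurd (h0 hk).2.1 he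
      · exact h1r (Nat.pos_iff_ne_zero.mp hk)
  · -- T3
    refine Or.inr ⟨r + 1, ?_, ?_, fun h => absurd h (Nat.succ_ne_zero k), fun _ => Nat.le_add_left 1 r⟩
    · dsimp only [Tm.deg]
      rw [sum_update_core]
      rw [hs] at h1
      push_cast at h1 ⊢
      linarith
    · dsimp only
      push_cast at h2 ⊢
      linarith

lemma inv_dTau {d s : ℝ} (hd : 0 < d) {k j : ℕ} {T : Tm n} (hT : TInv d s k j T) :
    ∀ T' ∈ T.dTau, TInv d s k (j+1) T' := by
  intro T' hT'
  simp only [Tm.dTau, List.mem_cons, List.not_mem_nil, or_false] at hT'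
  have hdne : d ≠ 0 := hd.ne'
  have hstep : (s - d*(↑j+1))/d = (s - d*↑j)/d - 1 := by field_simp; ring
  rcases hT with hc | ⟨r, h1, h2, h0, h1r⟩
  · rcases hT' with rfl | rfl <;> exact Or.inl (by simp [hc])
  rcases hT' with rfl | rfl
  · by_cases hb : T.b = 0
    · exact Or.inl (by simp [hb])
    refine Or.inr ⟨r, h1, ?_, h0, h1r⟩
    dsimp only
    have hb1 : (1:ℕ) ≤ T.b := Nat.one_le_iff_ne_zero.mpr hb
    push_cast [Nat.cast_sub hb1, hstep]
    linarith
  · refine Or.inr ⟨r, h1, ?_, h0, h1r⟩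
    dsimp only
    push_cast [hstep]
    linarith

lemma sumF_append (d : ℝ) (L₁ L₂ : List (Tm n)) (p : EuclideanSpace ℝ (Fin n) × ℝ) :
    sumF d (L₁ ++ L₂) p = sumF d L₁ p + sumF d L₂ p := by
  simp [sumF]

def Dxi (d : ℝ) (i : Fin n) (L : List (Tm n)) : List (Tm n) := L.flatMap (fun T => T.dXi d i)
def Dtau (L : List (Tm n)) : List (Tm n) := L.flatMap Tm.dTau

lemma sumF_hasFD {d : ℝ} (hd : 0 < d) (L : List (Tm n)) (p : EuclideanSpace ℝ (Fin n) × ℝ) :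
    ∃ M : (EuclideanSpace ℝ (Fin n) × ℝ) →L[ℝ] ℝ, HasFDerivAt (sumF d L) M p ∧
      (∀ i₀ : Fin n, M ((EuclideanSpace.single i₀ 1 : EuclideanSpace ℝ (Fin n)), (0:ℝ))
          = sumF d (Dxi d i₀ L) p) ∧
      M ((0 : EuclideanSpace ℝ (Fin n)), (1:ℝ)) = sumF d (Dtau L) p := by
  induction L with
  | nil =>
      refine ⟨0, ?_, ?_, ?_⟩
      · have : (sumF d ([] : List (Tm n))) = fun _ : EuclideanSpace ℝ (Fin n) × ℝ => (0:ℝ) := rfl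
        rw [this]; exact hasFDerivAt_const 0 p
      · intro i₀; simp [sumF, Dxi]
      · simp [sumF, Dtau]
  | cons T L ih =>
      obtain ⟨M, hM, hMx, hMt⟩ := ih
      obtain ⟨LT, hLT, hLx, hLt⟩ := T.hasFD hd p
      refine ⟨LT + M, ?_, ?_, ?_⟩
      · have : (sumF d (T :: L)) = fun q => T.f d q + sumF d L q := rfl
        rw [this]; exact hLT.add hM
      · intro i₀
        have : Dxi d i₀ (T :: L) = T.dXi d i₀ ++ Dxi d i₀ L := rfl
        rw [this, sumF_append]
        simp [hLx i₀, hMx i₀]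
      · have : Dtau (T :: L) = T.dTau ++ Dtau L := rfl
        rw [this, sumF_append]
        simp [hLt, hMt]

lemma fderiv_sumF_xi {d : ℝ} (hd : 0 < d) (L : List (Tm n)) (i₀ : Fin n)
    (p : EuclideanSpace ℝ (Fin n) × ℝ) :
    fderiv ℝ (sumF d L) p ((EuclideanSpace.single i₀ 1 : EuclideanSpace ℝ (Fin n)), (0:ℝ))
      = sumF d (Dxi d i₀ L) p := by
  obtain ⟨M, hM, hMx, _⟩ := sumF_hasFD hd L p
  rw [hM.fderiv]; exact hMx i₀

lemma fderiv_sumF_tau {d : ℝ} (hd : 0 < d) (L : List (Tm n))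
    (p : EuclideanSpace ℝ (Fin n) × ℝ) :
    fderiv ℝ (sumF d L) p ((0 : EuclideanSpace ℝ (Fin n)), (1:ℝ)) = sumF d (Dtau L) p := by
  obtain ⟨M, hM, _, hMt⟩ := sumF_hasFD hd L p
  rw [hM.fderiv]; exact hMt

lemma Tm.bound {d s : ℝ} (hd : 0 < d) {k j : ℕ} {T : Tm n} (hT : TInv d s k j T)
    (p : EuclideanSpace ℝ (Fin n) × ℝ) :
    |T.f d p| ≤ |T.c| * ((uf p ^ ((2*d - (k:ℝ))/2) + wf d p ^ ((2*d - (k:ℝ))/(2*d)))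
      * wf d p ^ ((s - 2*d - d*(j:ℝ))/(2*d))) := by
  have hu0 : (0:ℝ) < uf p := uf_pos p
  have hw0 : (0:ℝ) < wf d p := wf_pos hd p
  have hu1 : (1:ℝ) ≤ uf p := one_le_uf p
  have hw1 : (1:ℝ) ≤ wf d p := one_le_wf hd p
  have hdw : uf p ^ d ≤ wf d p := ufd_le_wf p
  have hd2 : (2:ℝ)*d ≠ 0 := by positivity
  -- step 1 : raw bound
  have hm : |∏ i, p.1 i ^ T.β i| ≤ uf p ^ ((T.deg : ℝ)/2) := by
    have hsq : ∀ i : Fin n, |p.1 i| ≤ uf p ^ ((1:ℝ)/2) := by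
      intro i
      have h2 : (p.1 i)^2 ≤ uf p := by
        have hle : (p.1 i)^2 ≤ ∑ i', (p.1 i')^2 :=
          Finset.single_le_sum (fun i' _ => sq_nonneg (p.1 i')) (mem_univ i)
        simp only [uf] at *; linarith
      rw [← Real.sqrt_eq_rpow]
      exact Real.abs_le_sqrt h2
    calc |∏ i, p.1 i ^ T.β i| = ∏ i, |p.1 i| ^ T.β i := by
          rw [Finset.abs_prod]; exact Finset.prod_congr rfl fun i _ => (abs_pow _ _)
      _ ≤ ∏ i, (uf p ^ ((1:ℝ)/2)) ^ T.β i :=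
          Finset.prod_le_prod (fun i _ => by positivity)
            (fun i _ => pow_le_pow_left₀ (abs_nonneg _) (hsq i) _)
      _ = (uf p ^ ((1:ℝ)/2)) ^ T.deg := by rw [Finset.prod_pow_eq_pow_sum]; rfl
      _ = uf p ^ ((T.deg : ℝ)/2) := by
          rw [← Real.rpow_natCast (uf p ^ ((1:ℝ)/2)) T.deg, ← Real.rpow_mul hu0.le]
          congr 1; ring
  have hτ : |p.2| ^ T.b ≤ wf d p ^ ((T.b : ℝ)/2) := by
    have h2 : (p.2)^2 ≤ wf d p := by
      have := one_le_ufd hd p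
      simp only [wf]; nlinarith
    have habs : |p.2| ≤ wf d p ^ ((1:ℝ)/2) := by
      rw [← Real.sqrt_eq_rpow]; exact Real.abs_le_sqrt h2
    calc |p.2| ^ T.b ≤ (wf d p ^ ((1:ℝ)/2)) ^ T.b :=
          pow_le_pow_left₀ (abs_nonneg _) habs _
      _ = wf d p ^ ((T.b : ℝ)/2) := by
          rw [← Real.rpow_natCast (wf d p ^ ((1:ℝ)/2)) T.b, ← Real.rpow_mul hw0.le]
          congr 1; ring
  have e1 : |T.f d p| = |T.c| * |∏ i, p.1 i ^ T.β i| * |p.2| ^ T.b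
      * uf p ^ T.e * wf d p ^ T.g := by
    simp [Tm.f, abs_mul, abs_pow, abs_of_pos (Real.rpow_pos_of_pos hu0 T.e),
      abs_of_pos (Real.rpow_pos_of_pos hw0 T.g)]
  have step1 : |T.f d p| ≤ |T.c| * (uf p ^ ((T.deg : ℝ)/2 + T.e)
      * wf d p ^ ((T.b : ℝ)/2 + T.g)) := by
    rw [e1]
    calc |T.c| * |∏ i, p.1 i ^ T.β i| * |p.2| ^ T.b * uf p ^ T.e * wf d p ^ T.g
        ≤ |T.c| * (uf p ^ ((T.deg : ℝ)/2)) * (wf d p ^ ((T.b : ℝ)/2))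
            * uf p ^ T.e * wf d p ^ T.g := by
          gcongr
          all_goals first | exact hm | exact hτ | exact abs_nonneg _ | positivity
      _ = |T.c| * (uf p ^ ((T.deg : ℝ)/2 + T.e) * wf d p ^ ((T.b : ℝ)/2 + T.g)) := by
          rw [Real.rpow_add hu0, Real.rpow_add hw0]; ring
  -- step 2 : cases
  rcases hT with hc | ⟨r, h1, h2, h0, h1r⟩
  · have : T.f d p = 0 := by simp [Tm.f, hc]
    rw [this, abs_zero]
    positivity
  rcases Nat.eq_zero_or_pos k with hk | hk
  · obtain ⟨hβ, he, hr⟩ := h0 hk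
    have hdeg : T.deg = 0 := by simp [Tm.deg, hβ]
    subst hk
    have hY : (T.b : ℝ)/2 + T.g = (s - d*(j:ℝ))/(2*d) := by
      subst hr
      push_cast at h2
      rw [show (2:ℝ)*d = d*2 by ring, ← div_div]
      linarith
    have hXzero : uf p ^ ((T.deg : ℝ)/2 + T.e) = 1 := by
      rw [hdeg, he]; norm_num
    have hsplit : wf d p ^ ((s - d*(j:ℝ))/(2*d))
        = wf d p ^ ((2*d - (0:ℝ))/(2*d)) * wf d p ^ ((s - 2*d - d*(j:ℝ))/(2*d)) := by
      rw [← Real.rpow_add hw0]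
      congr 1
      field_simp
      ring
    refine le_trans step1 ?_
    rw [hXzero, hY, one_mul, hsplit]
    have hnn1 : (0:ℝ) ≤ uf p ^ ((2*d - (0:ℝ))/2) := by positivity
    have hnn2 : (0:ℝ) ≤ wf d p ^ ((s - 2*d - d*(j:ℝ))/(2*d)) := by positivity
    push_cast
    nlinarith [mul_nonneg (mul_nonneg (abs_nonneg T.c) hnn1) hnn2]
  · have hr1 : 1 ≤ r := h1r (Nat.pos_iff_ne_zero.mp hk)
    have hrr : (1:ℝ) ≤ (r:ℝ) := by exact_mod_cast hr1
    have hX : (T.deg : ℝ)/2 + T.e = (2*d - (k:ℝ))/2 + d*((r:ℝ) - 1) := by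
      linarith [h1]
    have hY : (T.b : ℝ)/2 + T.g = (s - d*(j:ℝ))/(2*d) - r := by
      rw [show (2:ℝ)*d = d*2 by ring, ← div_div]
      linarith [h2]
    have keyu : uf p ^ ((T.deg : ℝ)/2 + T.e)
        = uf p ^ ((2*d - (k:ℝ))/2) * uf p ^ (d*((r:ℝ) - 1)) := by
      rw [hX, Real.rpow_add hu0]
    have keyuw : uf p ^ (d*((r:ℝ) - 1)) ≤ wf d p ^ ((r:ℝ) - 1) := by
      rw [Real.rpow_mul hu0.le]
      exact Real.rpow_le_rpow (Real.rpow_nonneg hu0.le d) hdw (by linarith)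
    have keyw : wf d p ^ ((r:ℝ) - 1) * wf d p ^ ((T.b : ℝ)/2 + T.g)
        = wf d p ^ ((s - 2*d - d*(j:ℝ))/(2*d)) := by
      rw [← Real.rpow_add hw0, hY]
      congr 1
      field_simp
      ring
    refine le_trans step1 ?_
    have hcore : uf p ^ ((T.deg : ℝ)/2 + T.e) * wf d p ^ ((T.b : ℝ)/2 + T.g)
        ≤ uf p ^ ((2*d - (k:ℝ))/2) * wf d p ^ ((s - 2*d - d*(j:ℝ))/(2*d)) := by
      rw [keyu, ← keyw]
      have h3 : (0:ℝ) ≤ uf p ^ ((2*d - (k:ℝ))/2) := by positivity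
      have h4 : (0:ℝ) ≤ wf d p ^ ((T.b : ℝ)/2 + T.g) := by positivity
      calc uf p ^ ((2*d - (k:ℝ))/2) * uf p ^ (d*((r:ℝ) - 1)) * wf d p ^ ((T.b : ℝ)/2 + T.g)
          ≤ uf p ^ ((2*d - (k:ℝ))/2) * wf d p ^ ((r:ℝ) - 1) * wf d p ^ ((T.b : ℝ)/2 + T.g) := by
            gcongr
        _ = uf p ^ ((2*d - (k:ℝ))/2) * (wf d p ^ ((r:ℝ) - 1) * wf d p ^ ((T.b : ℝ)/2 + T.g)) := by
            ring
    have hnn2 : (0:ℝ) ≤ wf d p ^ ((2*d - (k:ℝ))/(2*d)) * wf d p ^ ((s - 2*d - d*(j:ℝ))/(2*d)) := by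
      positivity
    have := mul_le_mul_of_nonneg_left hcore (abs_nonneg T.c)
    nlinarith [abs_nonneg T.c]

lemma sumF_bound {d s : ℝ} (hd : 0 < d) {k j : ℕ} (L : List (Tm n))
    (hL : ∀ T ∈ L, TInv d s k j T) (p : EuclideanSpace ℝ (Fin n) × ℝ) :
    |sumF d L p| ≤ (L.map fun T => |T.c|).sum * ((uf p ^ ((2*d - (k:ℝ))/2)
      + wf d p ^ ((2*d - (k:ℝ))/(2*d))) * wf d p ^ ((s - 2*d - d*(j:ℝ))/(2*d))) := by
  induction L with
  | nil => simp [sumF]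
  | cons T L ih =>
      have h1 : |sumF d (T :: L) p| ≤ |T.f d p| + |sumF d L p| := by
        have : sumF d (T :: L) p = T.f d p + sumF d L p := rfl
        rw [this]; exact abs_add_le _ _
      have h2 := Tm.bound hd (hL T List.mem_cons_self) p
      have h3 := ih (fun T' hT' => hL T' (List.mem_cons_of_mem T hT'))
      have : ((T :: L).map fun T => |T.c|).sum = |T.c| + (L.map fun T => |T.c|).sum := by simp
      rw [this, add_mul]
      linarith


lemma dLine_append {E F : Type*} [NormedAddCommGroup E] [NormedSpace ℝ E]
    [NormedAddCommGroup F] [NormedSpace ℝ F] (L₁ L₂ : List E) (f : E → F) :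
    dLine (L₁ ++ L₂) f = dLine L₁ (dLine L₂ f) := by
  induction L₁ with
  | nil => rfl
  | cons v L ih =>
      show (fun x => fderiv ℝ (dLine (L ++ L₂) f) x v) = _
      rw [ih]; rfl

lemma inv_Dtau {d s : ℝ} (hd : 0 < d) {k j : ℕ} {L : List (Tm n)}
    (h : ∀ T ∈ L, TInv d s k j T) : ∀ T ∈ Dtau L, TInv d s k (j+1) T := by
  intro T hT
  obtain ⟨T', hT', hmem⟩ := List.mem_flatMap.mp hT
  exact inv_dTau hd (h T' hT') T hmem

lemma inv_Dtau_iter {d s : ℝ} (hd : 0 < d) {k j : ℕ} {L : List (Tm n)}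
    (h : ∀ T ∈ L, TInv d s k j T) (m : ℕ) :
    ∀ T ∈ Dtau^[m] L, TInv d s k (j+m) T := by
  induction m generalizing L j with
  | zero => simpa using h
  | succ m ih =>
      intro T hT
      rw [Function.iterate_succ_apply] at hT
      have := ih (inv_Dtau hd h) T hT
      simpa [Nat.add_assoc, Nat.add_comm 1 m] using this

lemma inv_foldr {d s : ℝ} (hd : 0 < d) {k j : ℕ} (A : List (Fin n)) {L : List (Tm n)}
    (h : ∀ T ∈ L, TInv d s k j T) :
    ∀ T ∈ A.foldr (fun i acc => Dxi d i acc) L, TInv d s (k + A.length) j T := by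
  induction A with
  | nil => simpa using h
  | cons i A ih =>
      intro T hT
      simp only [List.foldr_cons] at hT
      obtain ⟨T', hT', hmem⟩ := List.mem_flatMap.mp hT
      have := inv_dXi hd (ih T' hT') i T hmem
      simpa [List.length_cons, Nat.add_assoc] using this

lemma dLine_tau {d : ℝ} (hd : 0 < d) (L : List (Tm n)) (m : ℕ) :
    dLine (List.replicate m ((0 : EuclideanSpace ℝ (Fin n)), (1:ℝ))) (sumF d L)
      = sumF d (Dtau^[m] L) := by
  induction m with
  | zero => rfl
  | succ m ih =>
      rw [List.replicate_succ]
      show (fun x => fderiv ℝ (dLine (List.replicate m _) (sumF d L)) x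
        ((0 : EuclideanSpace ℝ (Fin n)), (1:ℝ))) = _
      rw [ih]
      funext p
      rw [fderiv_sumF_tau hd, Function.iterate_succ_apply']

lemma dLine_xi {d : ℝ} (hd : 0 < d) (A : List (Fin n)) (L : List (Tm n)) :
    dLine (A.map fun i => ((EuclideanSpace.single i 1 : EuclideanSpace ℝ (Fin n)), (0:ℝ)))
        (sumF d L)
      = sumF d (A.foldr (fun i acc => Dxi d i acc) L) := by
  induction A with
  | nil => rfl
  | cons i A ih =>
      rw [List.map_cons]
      show (fun x => fderiv ℝ (dLine (A.map _) (sumF d L)) x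
        ((EuclideanSpace.single i 1 : EuclideanSpace ℝ (Fin n)), (0:ℝ))) = _
      rw [ih]
      funext p
      rw [fderiv_sumF_xi hd, List.foldr_cons]

lemma norm_sq_eq (ξ : EuclideanSpace ℝ (Fin n)) : ‖ξ‖^2 = ∑ i, (ξ i)^2 := by
  rw [EuclideanSpace.norm_eq, Real.sq_sqrt (Finset.sum_nonneg fun i _ => sq_nonneg _)]
  exact Finset.sum_congr rfl fun i _ => by rw [Real.norm_eq_abs, sq_abs]

lemma jap_eq (ξ : EuclideanSpace ℝ (Fin n)) (τ : ℝ) :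
    jap ξ = uf (ξ, τ) ^ ((1:ℝ)/2) := by
  simp only [jap, uf, norm_sq_eq]

lemma jap_rpow {d : ℝ} (hd : 0 < d) (ξ : EuclideanSpace ℝ (Fin n)) (τ : ℝ) (x : ℝ) :
    jap ξ ^ x = uf (ξ, τ) ^ (x/2) := by
  rw [jap_eq ξ τ, ← Real.rpow_mul (uf_pos (ξ, τ)).le]
  congr 1; ring

lemma kap_eq {d : ℝ} (hd : 0 < d) (ξ : EuclideanSpace ℝ (Fin n)) (τ : ℝ) :
    kap d ξ τ = wf d (ξ, τ) ^ (1/(2*d)) := by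
  simp only [kap, wf]
  congr 2
  rw [jap_rpow hd ξ τ (2*d)]
  congr 1; ring

lemma kap_rpow {d : ℝ} (hd : 0 < d) (ξ : EuclideanSpace ℝ (Fin n)) (τ : ℝ) (x : ℝ) :
    kap d ξ τ ^ x = wf d (ξ, τ) ^ (x/(2*d)) := by
  rw [kap_eq hd ξ τ, ← Real.rpow_mul (wf_pos hd (ξ, τ)).le]
  congr 1; ring

lemma F_eq {d s : ℝ} (hd : 0 < d) :
    (fun p : EuclideanSpace ℝ (Fin n) × ℝ => kap d p.1 p.2 ^ s)
      = sumF d [(⟨1, fun _ => 0, 0, 0, s/(2*d)⟩ : Tm n)] := by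
  funext p
  rw [kap_rpow hd p.1 p.2 s]
  simp [sumF, Tm.f]

lemma inv_T0 {d s : ℝ} (hd : 0 < d) :
    TInv d s 0 0 (⟨1, fun _ => 0, 0, 0, s/(2*d)⟩ : Tm n) := by
  refine Or.inr ⟨0, ?_, ?_, fun _ => ⟨fun i => rfl, rfl, rfl⟩, fun h => absurd rfl h⟩
  · simp [Tm.deg]
  · have hdne : d ≠ 0 := hd.ne'
    push_cast
    field_simp
    ring

/-- The function `{ξ,τ}^s` satisfies the anisotropic symbol estimates of order `m = s`
with regularity number `ν = 2d`.  The multi-index `α ∈ ℕⁿ` of `ξ`-derivatives is encoded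
as the list `A` of coordinate directions (so `|α| = A.length`), and `j` is the number of
`τ`-derivatives. -/
theorem stmt_0 {n : ℕ} (d s : ℝ) (hd : 0 < d) (A : List (Fin n)) (j : ℕ) :
    ∃ C : ℝ, 0 < C ∧ ∀ (ξ : EuclideanSpace ℝ (Fin n)) (τ : ℝ),
      |dLine
          (A.map (fun i => ((EuclideanSpace.single i 1 : EuclideanSpace ℝ (Fin n)), (0 : ℝ)))
            ++ List.replicate j ((0 : EuclideanSpace ℝ (Fin n)), (1 : ℝ)))
          (fun p : EuclideanSpace ℝ (Fin n) × ℝ => kap d p.1 p.2 ^ s) (ξ, τ)|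
        ≤ C * ((jap ξ ^ (2 * d - (A.length : ℝ)) + kap d ξ τ ^ (2 * d - (A.length : ℝ)))
            * kap d ξ τ ^ (s - 2 * d - d * (j : ℝ))) := by
  classical
  set L0 : List (Tm n) := [(⟨1, fun _ => 0, 0, 0, s/(2*d)⟩ : Tm n)] with hL0
  set Lfin : List (Tm n) := A.foldr (fun i acc => Dxi d i acc) (Dtau^[j] L0) with hLf
  have hS : (0:ℝ) ≤ (Lfin.map fun T => |T.c|).sum :=
    List.sum_nonneg (by intro x hx; obtain ⟨T, _, rfl⟩ := List.mem_map.mp hx; exact abs_nonneg _)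
  refine ⟨(Lfin.map fun T => |T.c|).sum + 1, by linarith, ?_⟩
  intro ξ τ
  have hInv : ∀ T ∈ Lfin, TInv d s A.length j T := by
    have h0 : ∀ T ∈ L0, TInv d s 0 0 T := by
      intro T hT
      simp only [hL0, List.mem_singleton] at hT
      subst hT
      exact inv_T0 hd
    have h1 := inv_Dtau_iter hd h0 j
    have h2 := inv_foldr hd A (by simpa using h1)
    simpa using h2
  have hEq : dLine
      (A.map (fun i => ((EuclideanSpace.single i 1 : EuclideanSpace ℝ (Fin n)), (0 : ℝ)))
        ++ List.replicate j ((0 : EuclideanSpace ℝ (Fin n)), (1 : ℝ)))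
      (fun p : EuclideanSpace ℝ (Fin n) × ℝ => kap d p.1 p.2 ^ s)
      = sumF d Lfin := by
    rw [dLine_append, F_eq hd, dLine_tau hd, dLine_xi hd]
  rw [hEq]
  have hb := sumF_bound hd Lfin hInv (ξ, τ)
  have hR1 : jap ξ ^ (2 * d - (A.length : ℝ)) = uf (ξ, τ) ^ ((2*d - (A.length:ℝ))/2) :=
    jap_rpow hd ξ τ _
  have hR2 : kap d ξ τ ^ (2 * d - (A.length : ℝ))
      = wf d (ξ, τ) ^ ((2*d - (A.length:ℝ))/(2*d)) := kap_rpow hd ξ τ _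
  have hR3 : kap d ξ τ ^ (s - 2 * d - d * (j : ℝ))
      = wf d (ξ, τ) ^ ((s - 2*d - d*(j:ℝ))/(2*d)) := kap_rpow hd ξ τ _
  rw [hR1, hR2, hR3]
  have hcore : (0:ℝ) ≤ (uf (ξ, τ) ^ ((2*d - (A.length:ℝ))/2)
      + wf d (ξ, τ) ^ ((2*d - (A.length:ℝ))/(2*d)))
      * wf d (ξ, τ) ^ ((s - 2*d - d*(j:ℝ))/(2*d)) := by
    have h1 := uf_pos (ξ, τ)
    have h2 := wf_pos hd (ξ, τ)
    exact mul_nonneg (add_nonneg (Real.rpow_pos_of_pos h1 _).le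
      (Real.rpow_pos_of_pos h2 _).le) (Real.rpow_pos_of_pos h2 _).le
  nlinarith [hb, hcore]

end
end

section
/- Let d > 0 and let p : ℝⁿ×ℝⁿ → ℂ be smooth with |∂_x^β ∂_ξ^α p(x,ξ)| ≤ C_{α,β} ⟨ξ⟩^{d-|α|} for all multi-indices α, β and all (x,ξ). Assume moreover that there is c > 0 such that |p(x,ξ) + iτ| ≥ c (⟨ξ⟩^d + |τ|) for all (x,ξ,τ). Then the function (p(x,ξ)+iτ)^{-1} belongs to the anisotropic symbol class S^{-d,d}_{1,0}: for all multi-indices α, β ∈ ℕⁿ and all j ∈ ℕ there exists C such that |∂_x^β ∂_ξ^α ∂_τ^j ( (p(x,ξ)+iτ)^{-1} )| ≤ C (⟨ξ⟩^{d-|α|} + {ξ,τ}^{d-|α|}) {ξ,τ}^{-2d-dj} for all (x,ξ,τ). -/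
/-- The anisotropic symbol class `S^{m,ν}_{1,0}` (order `m`, regularity number `ν`,
anisotropy `d`): a smooth function `h(x,ξ,τ)` such that for every multi-index of
`x`-derivatives (encoded as a list `B` of coordinate directions), every multi-index of
`ξ`-derivatives (encoded as a list `A`, with `|α| = A.length`) and every number `j` of
`τ`-derivatives, `|∂_x^β ∂_ξ^α ∂_τ^j h| ≤ C (⟨ξ⟩^{ν-|α|} + {ξ,τ}^{ν-|α|}) {ξ,τ}^{m-ν-dj}`. -/
def IsAnisoSymbol (n : ℕ) (d m ν : ℝ)
    (h : EuclideanSpace ℝ (Fin n) × EuclideanSpace ℝ (Fin n) × ℝ → ℂ) : Prop :=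
  ContDiff ℝ (⊤ : ℕ∞) h ∧
    ∀ (B A : List (Fin n)) (j : ℕ), ∃ C : ℝ, ∀ (x ξ : EuclideanSpace ℝ (Fin n)) (τ : ℝ),
      ‖dLine
          (B.map (fun i => ((EuclideanSpace.single i 1 : EuclideanSpace ℝ (Fin n)),
              (0 : EuclideanSpace ℝ (Fin n)), (0 : ℝ)))
            ++ A.map (fun i => ((0 : EuclideanSpace ℝ (Fin n)),
              (EuclideanSpace.single i 1 : EuclideanSpace ℝ (Fin n)), (0 : ℝ)))
            ++ List.replicate j ((0 : EuclideanSpace ℝ (Fin n)),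
              (0 : EuclideanSpace ℝ (Fin n)), (1 : ℝ)))
          h (x, ξ, τ)‖
        ≤ C * ((jap ξ ^ (ν - (A.length : ℝ)) + kap d ξ τ ^ (ν - (A.length : ℝ)))
            * kap d ξ τ ^ (m - ν - d * (j : ℝ)))


/-! ### Generic lemmas about `dLine` -/
section Generic
variable {E F G : Type*} [NormedAddCommGroup E] [NormedSpace ℝ E]
  [NormedAddCommGroup F] [NormedSpace ℝ F] [NormedAddCommGroup G] [NormedSpace ℝ G]

theorem dLine_nil (f : E → F) : dLine [] f = f := rfl
theorem dLine_cons (v : E) (L : List E) (f : E → F) :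
    dLine (v::L) f = fun x => fderiv ℝ (dLine L f) x v := rfl

theorem ContDiff.diffble {f : E → F} (hf : ContDiff ℝ (⊤:ℕ∞) f) : Differentiable ℝ f :=
  hf.differentiable (by simp)

theorem dLine_contDiff {f : E → F} (hf : ContDiff ℝ (⊤:ℕ∞) f) (L : List E) :
    ContDiff ℝ (⊤:ℕ∞) (dLine L f) := by
  induction L with
  | nil => exact hf
  | cons v L ih =>
    rw [dLine_cons]
    have h1 : ContDiff ℝ (⊤:ℕ∞) (fderiv ℝ (dLine L f)) := by
      apply ih.fderiv_right; exact_mod_cast le_rfl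
    exact (ContinuousLinearMap.apply ℝ F v).contDiff.comp h1

theorem dLine_zero_fun (L : List E) : dLine L (fun _ => (0:F)) = fun _ => 0 := by
  induction L with
  | nil => rfl
  | cons v L ih =>
    rw [dLine_cons, ih]
    funext x
    simp [fderiv_const]

theorem dLine_const (L : List E) (hL : L ≠ []) (cst : F) :
    dLine L (fun _ => cst) = fun _ => 0 := by
  induction L with
  | nil => simp at hL
  | cons v L ih =>
    rw [dLine_cons]
    cases L with
    | nil => funext x; simp [dLine_nil, fderiv_const]
    | cons w L' =>
      rw [ih (by simp)]
      funext x; simp [fderiv_const]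

theorem dLine_zero_mem (L : List E) (h0 : (0:E) ∈ L) (f : E → F) :
    dLine L f = fun _ => 0 := by
  induction L with
  | nil => simp at h0
  | cons v L ih =>
    rw [dLine_cons]
    rcases List.mem_cons.1 h0 with h | h
    · subst h; funext x; simp
    · rw [ih h]; funext x; simp [fderiv_const]

theorem dLine_add {f g : E → F} (hf : ContDiff ℝ (⊤:ℕ∞) f) (hg : ContDiff ℝ (⊤:ℕ∞) g)
    (L : List E) : dLine L (fun x => f x + g x) = fun x => dLine L f x + dLine L g x := by
  induction L with
  | nil => rfl
  | cons v L ih =>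
    rw [dLine_cons, ih]
    funext x
    rw [fderiv_fun_add ((dLine_contDiff hf L).diffble x) ((dLine_contDiff hg L).diffble x)]
    rfl

theorem dLine_comp_clm {g : G → F} (hg : ContDiff ℝ (⊤:ℕ∞) g) (π : E →L[ℝ] G) (L : List E) :
    dLine L (fun x => g (π x)) = fun x => dLine (L.map π) g (π x) := by
  induction L with
  | nil => rfl
  | cons v L ih =>
    rw [dLine_cons, ih]
    funext x
    have hdiff : DifferentiableAt ℝ (dLine (L.map π) g) (π x) :=
      (dLine_contDiff hg _).diffble _
    have : fderiv ℝ (fun x => dLine (L.map ⇑π) g (π x)) x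
        = (fderiv ℝ (dLine (L.map ⇑π) g) (π x)).comp π := by
      exact fderiv_comp x hdiff π.differentiableAt |>.trans (by rw [π.fderiv])
    rw [this]
    rfl

theorem dLine_clm_cons (ℓ : E →L[ℝ] F) (L : List E) (v : E) :
    ∃ cc : F, (dLine (v::L) ℓ = fun _ => cc) ∧ (L ≠ [] → cc = 0) := by
  induction L generalizing v with
  | nil =>
    exact ⟨ℓ v, by funext x; rw [dLine_cons, dLine_nil]; simp [ℓ.fderiv], by simp⟩
  | cons w L ih =>
    obtain ⟨cc, hcc, _⟩ := ih w
    refine ⟨0, ?_, fun _ => rfl⟩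
    funext x
    rw [dLine_cons, hcc]
    simp [fderiv_const]

theorem fderiv_swap {f : E → F} (hf : ContDiff ℝ (⊤:ℕ∞) f) (x : E) (v w : E) :
    fderiv ℝ (fun y => fderiv ℝ f y v) x w = fderiv ℝ (fun y => fderiv ℝ f y w) x v := by
  have hdf : ContDiff ℝ (⊤:ℕ∞) (fderiv ℝ f) := hf.fderiv_right (by exact_mod_cast le_rfl)
  have hsymm := second_derivative_symmetric
    (f := f) (f' := fderiv ℝ f) (f'' := fderiv ℝ (fderiv ℝ f) x) (x := x)
    (fun y => (hf.diffble y).hasFDerivAt)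
    ((hdf.diffble x).hasFDerivAt)
  have key : ∀ u z : E, fderiv ℝ (fun y => fderiv ℝ f y u) x z
      = fderiv ℝ (fderiv ℝ f) x z u := by
    intro u z
    have hc : HasFDerivAt (fun y => fderiv ℝ f y u)
        ((ContinuousLinearMap.apply ℝ F u).comp (fderiv ℝ (fderiv ℝ f) x)) x :=
      ((ContinuousLinearMap.apply ℝ F u).hasFDerivAt).comp x (hdf.diffble x).hasFDerivAt
    rw [hc.fderiv]
    rfl
  rw [key, key, hsymm]

theorem dLine_perm {f : E → F} (hf : ContDiff ℝ (⊤:ℕ∞) f) {L L' : List E} (hp : L.Perm L') :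
    dLine L f = dLine L' f := by
  induction hp with
  | nil => rfl
  | cons v _ ih => rw [dLine_cons, dLine_cons, ih]
  | swap v w L =>
    funext x
    rw [dLine_cons, dLine_cons, dLine_cons, dLine_cons]
    exact fderiv_swap (dLine_contDiff hf L) x v w
  | trans _ _ ih1 ih2 => rw [ih1, ih2]

end Generic

/-! ### splits and the Leibniz formula -/

def splits {α : Type*} : List α → List (List α × List α)
  | [] => [([], [])]
  | v :: L => (splits L).flatMap (fun st => [(v :: st.1, st.2), (st.1, v :: st.2)])

theorem splits_map {α β : Type*} (g : α → β) (L : List α) :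
    splits (L.map g) = (splits L).map (fun st => (st.1.map g, st.2.map g)) := by
  induction L with
  | nil => rfl
  | cons v L ih =>
    simp only [List.map_cons, splits, ih, List.flatMap_map, List.map_flatMap]
    rfl

theorem mem_splits_perm {α : Type*} {L : List α} {st : List α × List α}
    (h : st ∈ splits L) : (st.1 ++ st.2).Perm L := by
  induction L generalizing st with
  | nil => simp [splits] at h; simp [h]
  | cons v L ih =>
    simp only [splits, List.mem_flatMap, List.mem_cons] at h
    obtain ⟨ab, hab, h⟩ := h
    rcases h with h | h
    · subst h; simpa using (ih hab).cons v
    · simp at h; subst h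
      simp only []
      exact (List.perm_middle).trans ((ih hab).cons v)

theorem flatMap_ite {α β : Type*} (l : List α) (p : α → Bool) (g : α → β) :
    (l.flatMap (fun a => if p a then [g a] else [])) = (l.filter p).map g := by
  induction l with
  | nil => rfl
  | cons a l ih =>
    by_cases h : p a <;> simp [List.flatMap_cons, h, ih, List.filter_cons]

theorem splits_filter_nil {α : Type*} (L : List α) :
    (splits L).filter (fun st => st.1.isEmpty) = [([], L)] := by
  induction L with
  | nil => rfl
  | cons v L ih =>
    simp only [splits, List.filter_flatMap]
    have hfun : (fun (a : List α × List α) =>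
        List.filter (fun st => st.1.isEmpty) [(v :: a.1, a.2), (a.1, v :: a.2)])
        = fun a => if a.1.isEmpty then [((a.1 : List α), v :: a.2)] else [] := by
      funext a
      by_cases h : a.1.isEmpty <;> simp [List.filter, h]
    rw [hfun, flatMap_ite, ih]
    rfl

section MulLemma
variable {ι : Type*} {E : Type*} [NormedAddCommGroup E] [NormedSpace ℝ E]

theorem hasFDerivAt_list_sum {F : Type*} [NormedAddCommGroup F] [NormedSpace ℝ F]
    (l : List ι) (h : ι → E → F) (h' : ι → E →L[ℝ] F) (x : E)
    (hd : ∀ i ∈ l, HasFDerivAt (h i) (h' i) x) :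
    HasFDerivAt (fun z => (l.map (fun i => h i z)).sum) (l.map h').sum x := by
  induction l with
  | nil => simpa using hasFDerivAt_const (0:F) x
  | cons a l ih =>
    simp only [List.map_cons, List.sum_cons]
    exact (hd a (by simp)).add (ih (fun i hi => hd i (by simp [hi])))

theorem list_sum_apply {F : Type*} [NormedAddCommGroup F] [NormedSpace ℝ F]
    (l : List ι) (h' : ι → E →L[ℝ] F) (v : E) :
    ((l.map h').sum) v = (l.map (fun i => h' i v)).sum := by
  induction l with
  | nil => simp
  | cons a l ih => simp [ih]

theorem sum_flatMap_pair {M : Type*} [AddCommMonoid M] (l : List ι) (u w : ι → M) :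
    ((l.flatMap (fun a => [u a, w a])).sum) = (l.map (fun a => u a + w a)).sum := by
  induction l with
  | nil => rfl
  | cons a l ih => simp [List.flatMap_cons, ih, add_assoc]

theorem norm_list_sum_le {F : Type*} [NormedAddCommGroup F] (l : List ι) (f : ι → F) :
    ‖(l.map f).sum‖ ≤ (l.map (fun i => ‖f i‖)).sum := by
  induction l with
  | nil => simp
  | cons a l ih =>
    simp only [List.map_cons, List.sum_cons]
    exact (norm_add_le _ _).trans (by gcongr)

theorem list_sum_le_sum {l : List ι} {f g : ι → ℝ} (h : ∀ i ∈ l, f i ≤ g i) :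
    (l.map f).sum ≤ (l.map g).sum := by
  induction l with
  | nil => simp
  | cons a l ih =>
    simp only [List.map_cons, List.sum_cons]
    exact add_le_add (h a (by simp)) (ih (fun i hi => h i (by simp [hi])))

theorem exists_list_bound {Z : Type*} (l : List ι) (f : ι → Z → ℝ) (g : Z → ℝ)
    (hg : ∀ z, 0 ≤ g z)
    (h : ∀ i ∈ l, ∃ C : ℝ, 0 ≤ C ∧ ∀ z, f i z ≤ C * g z) :
    ∃ C : ℝ, 0 ≤ C ∧ ∀ z, (l.map (fun i => f i z)).sum ≤ C * g z := by
  induction l with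
  | nil => exact ⟨0, le_rfl, fun z => by simp⟩
  | cons a l ih =>
    obtain ⟨Ca, hCa, ha⟩ := h a (by simp)
    obtain ⟨Cl, hCl, hl⟩ := ih (fun i hi => h i (by simp [hi]))
    refine ⟨Ca + Cl, by positivity, fun z => ?_⟩
    simp only [List.map_cons, List.sum_cons, add_mul]
    exact add_le_add (ha z) (hl z)

theorem dLine_mul {f g : E → ℂ} (hf : ContDiff ℝ (⊤:ℕ∞) f) (hg : ContDiff ℝ (⊤:ℕ∞) g)
    (L : List E) :
    dLine L (fun z => f z * g z)
      = fun z => ((splits L).map (fun st => dLine st.1 f z * dLine st.2 g z)).sum := by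
  induction L with
  | nil => funext z; simp [splits, dLine]
  | cons v L ih =>
    rw [dLine_cons, ih]
    funext x
    have hterm : ∀ st ∈ splits L,
        HasFDerivAt (fun z => dLine st.1 f z * dLine st.2 g z)
          (dLine st.1 f x • fderiv ℝ (dLine st.2 g) x
            + dLine st.2 g x • fderiv ℝ (dLine st.1 f) x) x := by
      intro st _
      exact ((dLine_contDiff hf st.1).diffble x).hasFDerivAt.mul
        ((dLine_contDiff hg st.2).diffble x).hasFDerivAt
    have hsum := hasFDerivAt_list_sum (splits L)
      (fun st z => dLine st.1 f z * dLine st.2 g z)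
      (fun st => dLine st.1 f x • fderiv ℝ (dLine st.2 g) x
            + dLine st.2 g x • fderiv ℝ (dLine st.1 f) x) x hterm
    rw [hsum.fderiv, list_sum_apply]
    show _ = ((((splits L).flatMap
        (fun st => [(v :: st.1, st.2), (st.1, v :: st.2)])).map
        (fun st => dLine st.1 f x * dLine st.2 g x)).sum)
    rw [List.map_flatMap]
    have : ((splits L).flatMap fun a =>
        List.map (fun st => dLine st.1 f x * dLine st.2 g x)
          [(v :: a.1, a.2), (a.1, v :: a.2)])
        = (splits L).flatMap fun a =>
          [dLine (v :: a.1) f x * dLine a.2 g x, dLine a.1 f x * dLine (v :: a.2) g x] := by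
      simp
    rw [this, sum_flatMap_pair]
    congr 1
    apply List.map_congr_left
    intro st _
    simp only [ContinuousLinearMap.add_apply, ContinuousLinearMap.smul_apply]
    rw [dLine_cons, dLine_cons]
    simp only [smul_eq_mul]
    ring
end MulLemma

-- jap/kap basic facts
section JapKap
variable {n : ℕ} (d : ℝ) (hd : 0 < d) (ξ : EuclideanSpace ℝ (Fin n)) (τ : ℝ)

theorem one_le_jap : 1 ≤ jap ξ := by
  have : (1:ℝ) ≤ 1 + ‖ξ‖^2 := le_add_of_nonneg_right (sq_nonneg _)
  exact Real.one_le_rpow this (by norm_num)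

theorem jap_pos : 0 < jap ξ := lt_of_lt_of_le one_pos (one_le_jap ξ)

theorem one_le_kap (hd : 0 < d) : 1 ≤ kap d ξ τ := by
  have h1 : (1:ℝ) ≤ jap ξ ^ (2*d) := Real.one_le_rpow (one_le_jap ξ) (by positivity)
  have : (1:ℝ) ≤ jap ξ ^ (2*d) + τ^2 := by nlinarith [sq_nonneg τ]
  exact Real.one_le_rpow this (by positivity)

theorem kap_pos (hd : 0 < d) : 0 < kap d ξ τ := lt_of_lt_of_le one_pos (one_le_kap d ξ τ hd)

theorem jap_le_kap (hd : 0 < d) : jap ξ ≤ kap d ξ τ := by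
  have h0 : (0:ℝ) ≤ jap ξ := (jap_pos ξ).le
  have key : jap ξ = (jap ξ ^ (2*d)) ^ (1/(2*d)) := by
    rw [← Real.rpow_mul h0]
    rw [mul_one_div, div_self (by positivity)]
    exact (Real.rpow_one _).symm
  rw [key, kap]
  apply Real.rpow_le_rpow (by positivity) (by nlinarith [sq_nonneg τ]) (by positivity)

theorem kap_rpow_d (hd : 0 < d) : kap d ξ τ ^ d = (jap ξ ^ (2*d) + τ^2) ^ ((1:ℝ)/2) := by
  have hb : (0:ℝ) ≤ jap ξ ^ (2*d) + τ^2 :=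
    add_nonneg (Real.rpow_nonneg (jap_pos ξ).le _) (sq_nonneg τ)
  rw [kap, ← Real.rpow_mul hb]
  congr 1
  field_simp

theorem kap_d_le (hd : 0 < d) : kap d ξ τ ^ d ≤ jap ξ ^ d + |τ| := by
  rw [kap_rpow_d d ξ τ hd]
  have hA : (0:ℝ) ≤ jap ξ ^ d := Real.rpow_nonneg (jap_pos ξ).le d
  have hb : (0:ℝ) ≤ jap ξ ^ (2*d) + τ^2 :=
    add_nonneg (Real.rpow_nonneg (jap_pos ξ).le _) (sq_nonneg τ)
  have hsq : jap ξ ^ (2*d) = (jap ξ ^ d)^(2:ℕ) := by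
    rw [← Real.rpow_natCast (jap ξ ^ d) 2, ← Real.rpow_mul (jap_pos ξ).le]
    congr 1
    push_cast
    ring
  have h1 : jap ξ ^ (2*d) + τ^2 ≤ (jap ξ ^ d + |τ|)^(2:ℕ) := by
    rw [hsq]
    have : τ^2 = |τ|^2 := (sq_abs τ).symm
    nlinarith [abs_nonneg τ, hA]
  calc (jap ξ ^ (2*d) + τ^2) ^ ((1:ℝ)/2)
      ≤ ((jap ξ ^ d + |τ|)^(2:ℕ)) ^ ((1:ℝ)/2) := by
        apply Real.rpow_le_rpow hb h1 (by norm_num)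
    _ = jap ξ ^ d + |τ| := by
        rw [← Real.rpow_natCast (jap ξ ^ d + |τ|) 2, ← Real.rpow_mul (by positivity)]
        norm_num

theorem jap_rpow_le_kap_rpow (hd : 0 < d) {e : ℝ} (he : 0 ≤ e) :
    jap ξ ^ e ≤ kap d ξ τ ^ e :=
  Real.rpow_le_rpow (jap_pos ξ).le (jap_le_kap d ξ τ hd) he

end JapKap

/-! ### Direction tags -/

abbrev XS (n : ℕ) := EuclideanSpace ℝ (Fin n)
abbrev ES (n : ℕ) := XS n × XS n × ℝ
abbrev DirT (n : ℕ) := Fin n ⊕ Fin n ⊕ Unit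

variable {n : ℕ}

noncomputable def toVec : DirT n → ES n
  | .inl i => (EuclideanSpace.single i 1, 0, 0)
  | .inr (.inl i) => (0, EuclideanSpace.single i 1, 0)
  | .inr (.inr _) => (0, 0, 1)

def isTau : DirT n → Bool
  | .inr (.inr _) => true
  | _ => false

def isXi : DirT n → Bool
  | .inr (.inl _) => true
  | _ => false

@[simp] theorem isTau_inl (i : Fin n) : isTau (Sum.inl i : DirT n) = false := rfl
@[simp] theorem isTau_inr_inl (i : Fin n) : isTau (Sum.inr (Sum.inl i) : DirT n) = false := rfl
@[simp] theorem isTau_inr_inr (u : Unit) : isTau (Sum.inr (Sum.inr u) : DirT n) = true := rfl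
@[simp] theorem isXi_inl (i : Fin n) : isXi (Sum.inl i : DirT n) = false := rfl
@[simp] theorem isXi_inr_inl (i : Fin n) : isXi (Sum.inr (Sum.inl i) : DirT n) = true := rfl
@[simp] theorem isXi_inr_inr (u : Unit) : isXi (Sum.inr (Sum.inr u) : DirT n) = false := rfl

def ctTau (S : List (DirT n)) : ℕ := S.countP isTau
def ctXi (S : List (DirT n)) : ℕ := S.countP isXi
def ctNT (S : List (DirT n)) : ℕ := S.countP (fun w => !isTau w)

def fX : DirT n → Option (Fin n)
  | .inl i => some i
  | _ => none

def fXi : DirT n → Option (Fin n)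
  | .inr (.inl i) => some i
  | _ => none

noncomputable def piE (n : ℕ) : ES n →L[ℝ] XS n × XS n :=
  (ContinuousLinearMap.fst ℝ (XS n) (XS n × ℝ)).prod
    ((ContinuousLinearMap.fst ℝ (XS n) ℝ).comp (ContinuousLinearMap.snd ℝ (XS n) (XS n × ℝ)))

noncomputable def ellE (n : ℕ) : ES n →L[ℝ] ℂ :=
  Complex.I • (Complex.ofRealCLM.comp
    ((ContinuousLinearMap.snd ℝ (XS n) ℝ).comp (ContinuousLinearMap.snd ℝ (XS n) (XS n × ℝ))))

theorem piE_apply (z : ES n) : piE n z = (z.1, z.2.1) := rfl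

theorem ellE_apply (z : ES n) : ellE n z = Complex.I * (z.2.2 : ℂ) := by
  simp [ellE, smul_eq_mul]

theorem ellE_toVec_nontau {w : DirT n} (hw : isTau w = false) : ellE n (toVec w) = 0 := by
  rcases w with i | i | u
  · simp [toVec, ellE_apply]
  · simp [toVec, ellE_apply]
  · simp [isTau] at hw

theorem piE_toVec_tau {w : DirT n} (hw : isTau w = true) :
    piE n (toVec w) = (0 : XS n × XS n) := by
  rcases w with i | i | u
  · simp [isTau] at hw
  · simp [isTau] at hw
  · rfl

theorem ctXi_filterMap (S : List (DirT n)) : (S.filterMap fXi).length = ctXi S := by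
  unfold ctXi
  induction S with
  | nil => rfl
  | cons w S ih =>
    rcases w with i | i | u <;>
      simp [List.filterMap_cons, fXi, List.countP_cons, isXi, ih]

theorem pure_perm (S : List (DirT n)) (hp : ∀ w ∈ S, isTau w = false) :
    (S.map (fun w => piE n (toVec w))).Perm
      ((S.filterMap fX).map (fun i => ((EuclideanSpace.single i 1 : XS n), (0 : XS n)))
        ++ (S.filterMap fXi).map (fun i => ((0 : XS n), (EuclideanSpace.single i 1 : XS n)))) := by
  induction S with
  | nil => rfl
  | cons w S ih =>
    have hS : ∀ w ∈ S, isTau w = false := fun v hv => hp v (by simp [hv])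
    rcases w with i | i | u
    · simp only [List.map_cons, List.filterMap_cons]
      show (piE n (toVec (Sum.inl i)) :: _).Perm _
      have hv : piE n (toVec (Sum.inl i))
          = ((EuclideanSpace.single i 1 : XS n), (0:XS n)) := rfl
      rw [hv]
      simp only [fX, fXi, List.map_cons, List.cons_append]
      exact (ih hS).cons _
    · simp only [List.map_cons, List.filterMap_cons]
      show (piE n (toVec (Sum.inr (Sum.inl i))) :: _).Perm _
      refine ((ih hS).cons _).trans ?_
      show ((((0:XS n), (EuclideanSpace.single i 1 : XS n))) :: _).Perm _
      simp only [fX, fXi, List.map_cons]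
      exact List.perm_middle.symm
    · have := hp (Sum.inr (Sum.inr u)) (by simp)
      simp [isTau] at this

/-! ### The symbol q and its derivatives -/

noncomputable def qf (p : XS n × XS n → ℂ) : ES n → ℂ :=
  fun z => p (z.1, z.2.1) + Complex.I * (z.2.2 : ℂ)

theorem qf_eq (p : XS n × XS n → ℂ) : qf p = fun z => p (piE n z) + ellE n z := by
  funext z
  rw [qf, piE_apply, ellE_apply]

theorem qf_contDiff {p : XS n × XS n → ℂ} (hp : ContDiff ℝ (⊤:ℕ∞) p) :
    ContDiff ℝ (⊤:ℕ∞) (qf p) := by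
  rw [qf_eq]
  exact (hp.comp (piE n).contDiff).add (ellE n).contDiff

section QDeriv
variable {p : XS n × XS n → ℂ}

theorem dLine_qf_pure (hp : ContDiff ℝ (⊤:ℕ∞) p) (S : List (DirT n)) (hS : S ≠ [])
    (hpure : ∀ w ∈ S, isTau w = false) :
    dLine (S.map toVec) (qf p) = fun z =>
      dLine ((S.filterMap fX).map (fun i => ((EuclideanSpace.single i 1 : XS n), (0 : XS n)))
        ++ (S.filterMap fXi).map (fun i => ((0 : XS n), (EuclideanSpace.single i 1 : XS n))))
        p (piE n z) := by
  rw [qf_eq, dLine_add (f := fun z => p (piE n z)) (g := fun z => ellE n z)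
    (hp.comp (piE n).contDiff) (ellE n).contDiff]
  have hell : dLine (S.map toVec) (ellE n) = fun _ => 0 := by
    cases S with
    | nil => simp at hS
    | cons w S' =>
      rw [List.map_cons]
      obtain ⟨cc, hcc, hcc0⟩ := dLine_clm_cons (ellE n) (S'.map toVec) (toVec w)
      cases S' with
      | nil =>
        funext x
        simp only [List.map_nil]
        show fderiv ℝ (⇑(ellE n)) x (toVec w) = 0
        rw [(ellE n).fderiv]
        exact ellE_toVec_nontau (hpure w (by simp))
      | cons w' S'' =>
        rw [hcc, hcc0 (by simp)]
  have hcomp : dLine (S.map toVec) (fun z => p (piE n z))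
      = fun z => dLine ((S.map toVec).map (piE n)) p (piE n z) :=
    dLine_comp_clm hp (piE n) (S.map toVec)
  have hpp : dLine (List.map (⇑(piE n) ∘ toVec) S) p
      = dLine ((S.filterMap fX).map (fun i => ((EuclideanSpace.single i 1 : XS n), (0 : XS n)))
        ++ (S.filterMap fXi).map (fun i => ((0 : XS n), (EuclideanSpace.single i 1 : XS n)))) p :=
    dLine_perm hp (pure_perm S hpure)
  rw [hell, hcomp]
  funext z
  show dLine ((S.map toVec).map (piE n)) p (piE n z) + 0 = _
  rw [add_zero, List.map_map, hpp]

theorem dLine_qf_tau (hp : ContDiff ℝ (⊤:ℕ∞) p) (w : DirT n) (hw : isTau w = true) :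
    dLine [toVec w] (qf p) = fun _ => Complex.I := by
  funext z
  rw [dLine_cons, dLine_nil]
  have hq : HasFDerivAt (qf p) ((fderiv ℝ p (piE n z)).comp (piE n) + ellE n) z := by
    rw [qf_eq]
    exact (((hp.diffble (piE n z)).hasFDerivAt).comp z (piE n).hasFDerivAt).add
      (ellE n).hasFDerivAt
  show fderiv ℝ (qf p) z (toVec w) = Complex.I
  rw [hq.fderiv]
  have h1 : piE n (toVec w) = 0 := piE_toVec_tau hw
  have h2 : ellE n (toVec w) = Complex.I := by
    rcases w with i | i | u
    · simp [isTau] at hw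
    · simp [isTau] at hw
    · simp [toVec, ellE_apply]
  simp [h1, h2]

theorem dLine_qf_mixed (hp : ContDiff ℝ (⊤:ℕ∞) p) (S : List (DirT n)) (h2 : 2 ≤ S.length)
    (hτ : ∃ w ∈ S, isTau w = true) :
    dLine (S.map toVec) (qf p) = fun _ => 0 := by
  rw [qf_eq, dLine_add (f := fun z => p (piE n z)) (g := fun z => ellE n z)
    (hp.comp (piE n).contDiff) (ellE n).contDiff]
  obtain ⟨w, hwS, hw⟩ := hτ
  have hell : dLine (S.map toVec) (ellE n) = fun _ => 0 := by
    cases S with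
    | nil => simp at h2
    | cons v S' =>
      cases S' with
      | nil => simp at h2
      | cons v' S'' =>
        rw [List.map_cons]
        obtain ⟨cc, hcc, hcc0⟩ := dLine_clm_cons (ellE n) ((v'::S'').map toVec) (toVec v)
        rw [hcc, hcc0 (by simp)]
  have hcomp : dLine (S.map toVec) (fun z => p (piE n z))
      = fun z => dLine ((S.map toVec).map (piE n)) p (piE n z) :=
    dLine_comp_clm hp (piE n) (S.map toVec)
  have hz : dLine ((S.map toVec).map (piE n)) p = fun _ => 0 := by
    apply dLine_zero_mem
    rw [List.map_map]
    refine List.mem_map.2 ⟨w, hwS, ?_⟩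
    exact piE_toVec_tau hw
  rw [hell, hcomp]
  funext z
  rw [hz, add_zero]
end QDeriv

/-! ### arithmetic lemmas -/

-- move exponent weight from J to K
theorem shift_le {J K : ℝ} (hJ0 : 0 < J) (hK0 : 0 < K) (hJK : J ≤ K)
    (a2 : ℝ) {t : ℝ} (ht : 0 ≤ t) (b1 : ℝ) :
    J ^ (a2 + t) * K ^ b1 ≤ J ^ a2 * K ^ (b1 + t) := by
  rw [Real.rpow_add hJ0, Real.rpow_add hK0]
  have h1 : J ^ t ≤ K ^ t := Real.rpow_le_rpow hJ0.le hJK ht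
  have h2 : (0:ℝ) ≤ J ^ a2 := (Real.rpow_pos_of_pos hJ0 _).le
  have h3 : (0:ℝ) ≤ K ^ b1 := (Real.rpow_pos_of_pos hK0 _).le
  calc J ^ a2 * J ^ t * K ^ b1 ≤ J ^ a2 * K ^ t * K ^ b1 := by
        apply mul_le_mul_of_nonneg_right _ h3
        exact mul_le_mul_of_nonneg_left h1 h2
    _ = J ^ a2 * (K ^ b1 * K ^ t) := by ring

-- pure case: J^(d-aS) * BndT ≤ K^d * BndL  where mL = 1
theorem key_pure {d : ℝ} (hd : 0 < d) {J K : ℝ} (hJ0 : 0 < J) (hK0 : 0 < K) (hJK : J ≤ K)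
    (aS aT jT mT : ℝ) (hmT : mT = 0 ∨ mT = 1) :
    J ^ (d - aS) * (J ^ (mT * d - aT) * K ^ (-(d * (mT + jT + 1))))
      ≤ K ^ d * (J ^ (1 * d - (aS + aT)) * K ^ (-(d * (1 + jT + 1)))) := by
  have hKd : K ^ d * K ^ (-(d * (1 + jT + 1))) = K ^ (-(d * (jT + 1))) := by
    rw [← Real.rpow_add hK0]; congr 1; ring
  have hrhs : K ^ d * (J ^ (1 * d - (aS + aT)) * K ^ (-(d * (1 + jT + 1))))
      = J ^ (d - aS - aT) * K ^ (-(d * (jT + 1))) := by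
    rw [show K ^ d * (J ^ (1 * d - (aS + aT)) * K ^ (-(d * (1 + jT + 1))))
      = J ^ (1 * d - (aS + aT)) * (K ^ d * K ^ (-(d * (1 + jT + 1)))) by ring, hKd]
    congr 2
    ring
  rw [hrhs]
  rcases hmT with h | h
  · subst h
    apply le_of_eq
    rw [← mul_assoc, ← Real.rpow_add hJ0]
    congr 2 <;> ring
  · subst h
    rw [← mul_assoc, ← Real.rpow_add hJ0]
    have he1 : d - aS + (1 * d - aT) = (d - aS - aT) + d := by ring
    have he2 : -(d * (1 + jT + 1)) = -(d * (jT + 1)) + (-d) := by ring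
    rw [he1, he2, Real.rpow_add hJ0, Real.rpow_add hK0]
    have h1 : J ^ d ≤ K ^ d := Real.rpow_le_rpow hJ0.le hJK hd.le
    have h2 : (0:ℝ) ≤ J ^ (d - aS - aT) := (Real.rpow_pos_of_pos hJ0 _).le
    have h4 : 0 < K ^ (-(d * (jT + 1))) := Real.rpow_pos_of_pos hK0 _
    have h5 : 0 < K ^ (-d) := Real.rpow_pos_of_pos hK0 _
    calc J ^ (d - aS - aT) * J ^ d * (K ^ (-(d * (jT + 1))) * K ^ (-d))
        ≤ J ^ (d - aS - aT) * K ^ d * (K ^ (-(d * (jT + 1))) * K ^ (-d)) := by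
          apply mul_le_mul_of_nonneg_right _ (by positivity)
          exact mul_le_mul_of_nonneg_left h1 h2
      _ = J ^ (d - aS - aT) * (K ^ (-(d * (jT + 1)))) * (K ^ d * K ^ (-d)) := by ring
      _ = J ^ (d - aS - aT) * K ^ (-(d * (jT + 1))) := by
          rw [← Real.rpow_add hK0]
          simp

-- tau case : BndT = K^d * BndL  (jL = jT + 1, same m, same a)
theorem key_tau {d : ℝ} {J K : ℝ} (hK0 : 0 < K) (e m jT : ℝ) :
    J ^ e * K ^ (-(d * (m + jT + 1))) = K ^ d * (J ^ e * K ^ (-(d * (m + (jT + 1) + 1)))) := by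
  rw [show K ^ d * (J ^ e * K ^ (-(d * (m + (jT + 1) + 1))))
    = J ^ e * (K ^ d * K ^ (-(d * (m + (jT + 1) + 1)))) by ring, ← Real.rpow_add hK0]
  congr 2
  ring

/-! ### Main bound -/

noncomputable def mR (S : List (DirT n)) : ℝ := if ctNT S = 0 then 0 else 1

noncomputable def Bnd (d : ℝ) (S : List (DirT n)) (z : ES n) : ℝ :=
  jap z.2.1 ^ (mR S * d - (ctXi S : ℝ))
    * kap d z.2.1 z.2.2 ^ (-(d * (mR S + (ctTau S : ℝ) + 1)))

theorem Bnd_pos {d : ℝ} (hd : 0 < d) (S : List (DirT n)) (z : ES n) : 0 < Bnd d S z :=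
  mul_pos (Real.rpow_pos_of_pos (jap_pos _) _)
    (Real.rpow_pos_of_pos (kap_pos d z.2.1 z.2.2 hd) _)

theorem mR_nonneg (S : List (DirT n)) : 0 ≤ mR S := by
  unfold mR; split <;> norm_num

section MainAux
variable {p : XS n × XS n → ℂ}

theorem qf_pure_bound (hp : ContDiff ℝ (⊤:ℕ∞) p) (d : ℝ)
    (hest : ∀ B A : List (Fin n), ∃ C : ℝ, ∀ (x ξ : XS n),
      ‖dLine (B.map (fun i => ((EuclideanSpace.single i 1 : XS n), (0 : XS n)))
          ++ A.map (fun i => ((0 : XS n), (EuclideanSpace.single i 1 : XS n)))) p (x, ξ)‖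
        ≤ C * jap ξ ^ (d - (A.length : ℝ)))
    (S : List (DirT n)) (hS : S ≠ []) (hpure : ∀ w ∈ S, isTau w = false) :
    ∃ C : ℝ, 0 ≤ C ∧ ∀ z : ES n,
      ‖dLine (S.map toVec) (qf p) z‖ ≤ C * jap z.2.1 ^ (d - (ctXi S : ℝ)) := by
  obtain ⟨C, hC⟩ := hest (S.filterMap fX) (S.filterMap fXi)
  refine ⟨max C 0, le_max_right _ _, fun z => ?_⟩
  rw [dLine_qf_pure hp S hS hpure]
  have h1 := hC z.1 z.2.1
  rw [ctXi_filterMap] at h1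
  have h2 : piE n z = (z.1, z.2.1) := rfl
  calc ‖dLine _ p (piE n z)‖ = ‖dLine _ p (z.1, z.2.1)‖ := by rw [h2]
    _ ≤ C * jap z.2.1 ^ (d - (ctXi S : ℝ)) := h1
    _ ≤ max C 0 * jap z.2.1 ^ (d - (ctXi S : ℝ)) := by
        apply mul_le_mul_of_nonneg_right (le_max_left _ _)
          (Real.rpow_nonneg (jap_pos _).le _)

theorem qf_norm_lower (d c : ℝ) (hd : 0 < d) (hc : 0 < c)
    (hlow : ∀ (x ξ : XS n) (τ : ℝ),
      c * (jap ξ ^ d + |τ|) ≤ ‖p (x, ξ) + Complex.I * (τ : ℂ)‖) (z : ES n) :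
    c * kap d z.2.1 z.2.2 ^ d ≤ ‖qf p z‖ :=
  le_trans (mul_le_mul_of_nonneg_left (kap_d_le d z.2.1 z.2.2 hd) hc.le)
    (hlow z.1 z.2.1 z.2.2)

theorem qf_ne_zero (d c : ℝ) (hd : 0 < d) (hc : 0 < c)
    (hlow : ∀ (x ξ : XS n) (τ : ℝ),
      c * (jap ξ ^ d + |τ|) ≤ ‖p (x, ξ) + Complex.I * (τ : ℂ)‖) (z : ES n) :
    qf p z ≠ 0 := by
  have h1 := qf_norm_lower (p := p) d c hd hc hlow z
  have h2 : 0 < c * kap d z.2.1 z.2.2 ^ d :=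
    mul_pos hc (Real.rpow_pos_of_pos (kap_pos d z.2.1 z.2.2 hd) _)
  intro h
  rw [h, norm_zero] at h1
  linarith

theorem main_aux (d : ℝ) (hd : 0 < d) (hp : ContDiff ℝ (⊤:ℕ∞) p)
    (hest : ∀ B A : List (Fin n), ∃ C : ℝ, ∀ (x ξ : XS n),
      ‖dLine (B.map (fun i => ((EuclideanSpace.single i 1 : XS n), (0 : XS n)))
          ++ A.map (fun i => ((0 : XS n), (EuclideanSpace.single i 1 : XS n)))) p (x, ξ)‖
        ≤ C * jap ξ ^ (d - (A.length : ℝ)))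
    (c : ℝ) (hc : 0 < c)
    (hlow : ∀ (x ξ : XS n) (τ : ℝ),
      c * (jap ξ ^ d + |τ|) ≤ ‖p (x, ξ) + Complex.I * (τ : ℂ)‖) :
    ∀ L : List (DirT n), ∃ C : ℝ, 0 ≤ C ∧ ∀ z : ES n,
      ‖dLine (L.map toVec) (fun z => (qf p z)⁻¹) z‖ ≤ C * Bnd d L z := by
  have hqne := qf_ne_zero (p := p) d c hd hc hlow
  have hqlow := qf_norm_lower (p := p) d c hd hc hlow
  have hqsm : ContDiff ℝ (⊤:ℕ∞) (qf p) := qf_contDiff hp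
  have hrsm : ContDiff ℝ (⊤:ℕ∞) (fun z => (qf p z)⁻¹) := hqsm.inv hqne
  set r : ES n → ℂ := fun z => (qf p z)⁻¹ with hr
  -- inverse norm bound
  have hinv : ∀ z : ES n, ‖r z‖ ≤ c⁻¹ * kap d z.2.1 z.2.2 ^ (-d) := by
    intro z
    have hkpos : (0:ℝ) < kap d z.2.1 z.2.2 ^ d :=
      Real.rpow_pos_of_pos (kap_pos d z.2.1 z.2.2 hd) _
    have h1 : 0 < ‖qf p z‖ := lt_of_lt_of_le (mul_pos hc hkpos) (hqlow z)
    rw [hr]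
    simp only [norm_inv]
    rw [Real.rpow_neg (kap_pos d z.2.1 z.2.2 hd).le, ← mul_inv]
    exact inv_anti₀ (mul_pos hc hkpos) (hqlow z)
  -- strong induction on length
  suffices H : ∀ N : ℕ, ∀ L : List (DirT n), L.length ≤ N →
      ∃ C : ℝ, 0 ≤ C ∧ ∀ z : ES n, ‖dLine (L.map toVec) r z‖ ≤ C * Bnd d L z by
    exact fun L => H L.length L le_rfl
  have hbase : ∃ C : ℝ, 0 ≤ C ∧ ∀ z : ES n,
      ‖dLine (([] : List (DirT n)).map toVec) r z‖ ≤ C * Bnd d [] z := by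
    refine ⟨c⁻¹, by positivity, fun z => ?_⟩
    have hBnd : Bnd d ([] : List (DirT n)) z = kap d z.2.1 z.2.2 ^ (-d) := by
      unfold Bnd mR ctNT ctXi ctTau
      simp
    rw [hBnd]
    exact hinv z
  intro N
  induction N with
  | zero =>
    intro L hlen
    rw [List.length_eq_zero_iff.1 (Nat.le_zero.1 hlen)]
    exact hbase
  | succ N ihN =>
    intro L hlen
    rcases eq_or_ne L [] with hL | hL
    · rw [hL]; exact hbase
    · -- main step
      set flt := (splits L).filter (fun st => !st.1.isEmpty) with hflt
      set F : (List (DirT n) × List (DirT n)) → ES n → ℂ :=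
        fun st z => dLine (st.1.map toVec) (qf p) z * dLine (st.2.map toVec) r z with hFdef
      have hkey : ∀ z : ES n, qf p z * dLine (L.map toVec) r z
          = - ((flt.map (fun st => F st z)).sum) := by
        intro z
        have hmul := dLine_mul hqsm hrsm (L.map toVec)
        have hz : (((splits (L.map toVec)).map
            (fun st => dLine st.1 (qf p) z * dLine st.2 r z)).sum) = 0 := by
          have h0 : dLine (L.map toVec) (fun z => qf p z * r z) = fun _ => (0:ℂ) := by
            have hqr : (fun z => qf p z * r z) = fun _ => (1:ℂ) := by
              funext y; exact mul_inv_cancel₀ (hqne y)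
            rw [hqr]
            exact dLine_const _ (by simpa using hL) 1
          exact congrFun (hmul.symm.trans h0) z
        rw [splits_map, List.map_map] at hz
        have hcomp : ((fun (st : List (ES n) × List (ES n)) =>
              dLine st.1 (qf p) z * dLine st.2 r z)
            ∘ (fun (st : List (DirT n) × List (DirT n)) =>
              (st.1.map toVec, st.2.map toVec))) = fun st => F st z := rfl
        rw [hcomp] at hz
        have hsplit : (((splits L).map (fun st => F st z)).sum)
            = qf p z * dLine (L.map toVec) r z + ((flt.map (fun st => F st z)).sum) := by
          have hperm := (List.filter_append_perm (fun st => st.1.isEmpty) (splits L))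
          have hs := (hperm.map (fun st => F st z)).sum_eq
          rw [← hs, List.map_append, List.sum_append, splits_filter_nil]
          simp only [List.map_cons, List.map_nil, List.sum_cons, List.sum_nil, add_zero]
          rfl
        rw [hsplit] at hz
        exact eq_neg_of_add_eq_zero_left hz
      -- per-pair bounds
      have hpair : ∀ st ∈ flt, ∃ C : ℝ, 0 ≤ C ∧ ∀ z : ES n,
          ‖F st z‖ ≤ C * (kap d z.2.1 z.2.2 ^ d * Bnd d L z) := by
        intro st hst
        have hmem : st ∈ splits L := List.mem_of_mem_filter hst
        have hne : st.1 ≠ [] := by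
          have h1 := List.of_mem_filter hst
          simp only [Bool.not_eq_true'] at h1
          exact fun h => by simp [h] at h1
        have hperm : (st.1 ++ st.2).Perm L := mem_splits_perm hmem
        have hlen12 : st.1.length + st.2.length = L.length := by
          simpa using hperm.length_eq
        have hone : 1 ≤ st.1.length := by
          cases h : st.1 with
          | nil => exact absurd h hne
          | cons a l => simp [h]
        have hT : st.2.length ≤ N := by omega
        obtain ⟨CT, hCT0, hCT⟩ := ihN st.2 hT
        have hXi : ctXi st.1 + ctXi st.2 = ctXi L := by
          unfold ctXi
          rw [← List.countP_append]
          exact hperm.countP_eq _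
        have hTau : ctTau st.1 + ctTau st.2 = ctTau L := by
          unfold ctTau
          rw [← List.countP_append]
          exact hperm.countP_eq _
        have hNT : ctNT st.1 + ctNT st.2 = ctNT L := by
          unfold ctNT
          rw [← List.countP_append]
          exact hperm.countP_eq _
        by_cases hτS : ctTau st.1 = 0
        · -- pure case
          have hpureS : ∀ w ∈ st.1, isTau w = false := by
            intro w hw
            have := List.countP_eq_zero.1 hτS w hw
            simpa using this
          obtain ⟨CS, hCS0, hCS⟩ := qf_pure_bound hp d hest st.1 hne hpureS
          refine ⟨CS * CT, by positivity, fun z => ?_⟩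
          have hJ0 := jap_pos z.2.1
          have hK0 := kap_pos d z.2.1 z.2.2 hd
          have hJK := jap_le_kap d z.2.1 z.2.2 hd
          -- mR L = 1
          have hNTS : ctNT st.1 ≠ 0 := by
            have hcp : st.1.countP (fun w => !isTau w) = st.1.length := by
              apply List.countP_eq_length.2
              intro w hw
              simp [hpureS w hw]
            unfold ctNT
            rw [hcp]
            omega
          have hmL : mR L = 1 := by
            unfold mR
            rw [if_neg (by omega)]
          have hmT : mR st.2 = 0 ∨ mR st.2 = 1 := by
            unfold mR; split <;> simp
          -- key inequality
          have hkey2 : jap z.2.1 ^ (d - (ctXi st.1 : ℝ)) * Bnd d st.2 z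
              ≤ kap d z.2.1 z.2.2 ^ d * Bnd d L z := by
            unfold Bnd
            rw [hmL, ← hXi, ← hTau, hτS]
            push_cast
            rw [show ((0:ℝ) + (ctTau st.2 : ℝ)) = (ctTau st.2 : ℝ) by ring]
            exact key_pure hd hJ0 hK0 hJK _ _ _ _ hmT
          calc ‖F st z‖
              = ‖dLine (st.1.map toVec) (qf p) z‖ * ‖dLine (st.2.map toVec) r z‖ :=
                norm_mul _ _
            _ ≤ (CS * jap z.2.1 ^ (d - (ctXi st.1 : ℝ))) * (CT * Bnd d st.2 z) := by
                apply mul_le_mul (hCS z) (hCT z) (norm_nonneg _)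
                positivity
            _ = (CS * CT) * (jap z.2.1 ^ (d - (ctXi st.1 : ℝ)) * Bnd d st.2 z) := by ring
            _ ≤ (CS * CT) * (kap d z.2.1 z.2.2 ^ d * Bnd d L z) := by
                apply mul_le_mul_of_nonneg_left hkey2 (by positivity)
        · -- st.1 contains a tau direction
          by_cases hlen1 : st.1.length = 1
          · -- st.1 = [w] with isTau w
            obtain ⟨w, hw⟩ := List.length_eq_one_iff.1 hlen1
            have hwt : isTau w = true := by
              by_contra hwt
              apply hτS
              unfold ctTau
              rw [hw, List.countP_cons]
              simp [Bool.eq_false_iff.2 hwt]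
            refine ⟨CT, hCT0, fun z => ?_⟩
            have hK0 := kap_pos d z.2.1 z.2.2 hd
            have hBT : Bnd d st.2 z = kap d z.2.1 z.2.2 ^ d * Bnd d L z := by
              unfold Bnd
              have hXi2 : ctXi st.2 = ctXi L := by
                have : ctXi st.1 = 0 := by
                  unfold ctXi
                  rw [hw, List.countP_cons]
                  rcases w with i | i | u <;> simp_all [isXi, isTau]
                omega
              have hNT2 : ctNT st.2 = ctNT L := by
                have : ctNT st.1 = 0 := by
                  unfold ctNT
                  rw [hw, List.countP_cons]
                  simp [hwt]
                omega
              have hTau2 : ctTau st.1 = 1 := by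
                unfold ctTau
                rw [hw, List.countP_cons]
                simp [hwt]
              have hTau3 : ctTau L = ctTau st.2 + 1 := by omega
              have hm : mR st.2 = mR L := by unfold mR; rw [hNT2]
              rw [hXi2, hm, hTau3]
              push_cast
              exact key_tau hK0 _ _ _
            have hFw : F st z = Complex.I * dLine (st.2.map toVec) r z := by
              rw [hFdef]
              simp only [hw]
              rw [show ([w].map toVec) = [toVec w] by simp,
                dLine_qf_tau hp w hwt]
            rw [hFw]
            rw [norm_mul, Complex.norm_I, one_mul, ← hBT]
            exact hCT z
          · -- mixed: derivative of q vanishes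
            refine ⟨0, le_rfl, fun z => ?_⟩
            have h2 : 2 ≤ st.1.length := by omega
            have hτex : ∃ w ∈ st.1, isTau w = true := by
              by_contra hcon
              push_neg at hcon
              apply hτS
              apply List.countP_eq_zero.2
              intro w hw
              simpa using (hcon w hw)
            have hFz : F st z = 0 := by
              rw [hFdef]
              simp only []
              rw [dLine_qf_mixed hp st.1 h2 hτex]
              simp
            rw [hFz, norm_zero, zero_mul]
      -- combine
      obtain ⟨Csum, hCs0, hCs⟩ := exists_list_bound flt (fun st z => ‖F st z‖)
        (fun z => kap d z.2.1 z.2.2 ^ d * Bnd d L z)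
        (fun z => by
          have h1 := (Real.rpow_pos_of_pos (kap_pos d z.2.1 z.2.2 hd) d)
          have h2 := Bnd_pos hd L z
          positivity) hpair
      refine ⟨c⁻¹ * Csum, by positivity, fun z => ?_⟩
      have hK0 := kap_pos d z.2.1 z.2.2 hd
      have hKd : (0:ℝ) < kap d z.2.1 z.2.2 ^ d := Real.rpow_pos_of_pos hK0 _
      have hq0 : (0:ℝ) < ‖qf p z‖ := lt_of_lt_of_le (mul_pos hc hKd) (hqlow z)
      have step1 : ‖dLine (L.map toVec) r z‖
          = ‖qf p z‖⁻¹ * ‖qf p z * dLine (L.map toVec) r z‖ := by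
        rw [norm_mul, ← mul_assoc, inv_mul_cancel₀ (ne_of_gt hq0), one_mul]
      rw [step1, hkey z, norm_neg]
      calc ‖qf p z‖⁻¹ * ‖(flt.map (fun st => F st z)).sum‖
          ≤ ‖qf p z‖⁻¹ * ((flt.map (fun st => ‖F st z‖)).sum) := by
            apply mul_le_mul_of_nonneg_left _ (by positivity)
            exact norm_list_sum_le flt (fun st => F st z)
        _ ≤ (c * kap d z.2.1 z.2.2 ^ d)⁻¹
              * (Csum * (kap d z.2.1 z.2.2 ^ d * Bnd d L z)) := by
            apply mul_le_mul (inv_anti₀ (mul_pos hc hKd) (hqlow z)) (hCs z)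
            · apply List.sum_nonneg
              intro a ha
              obtain ⟨st, _, hst⟩ := List.mem_map.1 ha
              rw [← hst]; exact norm_nonneg _
            · positivity
        _ = c⁻¹ * Csum * Bnd d L z := by
            field_simp
end MainAux

/-! ### Final assembly -/

theorem final_case1 {d : ℝ} {J K : ℝ} (hK0 : 0 < K) (a j : ℝ) :
    J ^ (1*d - a) * K ^ (-(d*(1 + j + 1))) ≤ (J ^ (d-a) + K ^ (d-a)) * K ^ (-d - d - d*j) := by
  have h1 : (1:ℝ)*d - a = d - a := by ring
  have h2 : -(d*(1+j+1)) = -d - d - d*j := by ring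
  rw [h1, h2]
  exact mul_le_mul_of_nonneg_right
    (le_add_of_nonneg_right (Real.rpow_pos_of_pos hK0 _).le)
    (Real.rpow_pos_of_pos hK0 _).le

theorem final_case0 {d : ℝ} {J K : ℝ} (hJ0 : 0 < J) (hK0 : 0 < K) (j : ℝ) :
    J ^ ((0:ℝ)*d - 0) * K ^ (-(d*(0 + j + 1)))
      ≤ (J ^ (d-0) + K ^ (d-0)) * K ^ (-d - d - d*j) := by
  have h1 : (0:ℝ)*d - 0 = 0 := by ring
  rw [h1, Real.rpow_zero, one_mul, sub_zero]
  have h2 : -(d*(0+j+1)) = d + (-d - d - d*j) := by ring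
  rw [h2, Real.rpow_add hK0]
  exact mul_le_mul_of_nonneg_right
    (le_add_of_nonneg_left (Real.rpow_pos_of_pos hJ0 _).le)
    (Real.rpow_pos_of_pos hK0 _).le

theorem countP_replicate {α : Type*} (p : α → Bool) (a : α) (j : ℕ) :
    (List.replicate j a).countP p = if p a then j else 0 := by
  induction j with
  | zero => simp
  | succ j ih =>
    rw [List.replicate_succ, List.countP_cons, ih]
    split <;> simp_all


/-- If `p(x,ξ)` is a smooth symbol of order `d` on `ℝⁿ×ℝⁿ`
(`|∂_x^β ∂_ξ^α p| ≤ C_{α,β} ⟨ξ⟩^{d-|α|}`) and moreover `|p(x,ξ)+iτ| ≥ c(⟨ξ⟩^d + |τ|)`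
for some `c > 0`, then `(p(x,ξ)+iτ)⁻¹` belongs to the anisotropic symbol class
`S^{-d,d}_{1,0}` (so its estimates carry the factor `{ξ,τ}^{-2d-dj}`). -/
theorem stmt_3 {n : ℕ} (d : ℝ) (hd : 0 < d)
    (p : EuclideanSpace ℝ (Fin n) × EuclideanSpace ℝ (Fin n) → ℂ)
    (hp : ContDiff ℝ (⊤ : ℕ∞) p)
    (hest : ∀ B A : List (Fin n), ∃ C : ℝ, ∀ (x ξ : EuclideanSpace ℝ (Fin n)),
      ‖dLine
          (B.map (fun i => ((EuclideanSpace.single i 1 : EuclideanSpace ℝ (Fin n)),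
              (0 : EuclideanSpace ℝ (Fin n))))
            ++ A.map (fun i => ((0 : EuclideanSpace ℝ (Fin n)),
              (EuclideanSpace.single i 1 : EuclideanSpace ℝ (Fin n)))))
          p (x, ξ)‖
        ≤ C * jap ξ ^ (d - (A.length : ℝ)))
    (c : ℝ) (hc : 0 < c)
    (hlow : ∀ (x ξ : EuclideanSpace ℝ (Fin n)) (τ : ℝ),
      c * (jap ξ ^ d + |τ|) ≤ ‖p (x, ξ) + Complex.I * (τ : ℂ)‖) :
    IsAnisoSymbol n d (-d) d (fun q => (p (q.1, q.2.1) + Complex.I * (q.2.2 : ℂ))⁻¹) := by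
  constructor
  · exact (qf_contDiff hp).inv (qf_ne_zero (p := p) d c hd hc hlow)
  · intro B A j
    set L : List (DirT n) := B.map Sum.inl ++ A.map (fun i => Sum.inr (Sum.inl i))
        ++ List.replicate j (Sum.inr (Sum.inr ())) with hLdef
    have hList : L.map toVec
        = (B.map (fun i => ((EuclideanSpace.single i 1 : EuclideanSpace ℝ (Fin n)),
              (0 : EuclideanSpace ℝ (Fin n)), (0 : ℝ)))
            ++ A.map (fun i => ((0 : EuclideanSpace ℝ (Fin n)),
              (EuclideanSpace.single i 1 : EuclideanSpace ℝ (Fin n)), (0 : ℝ)))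
            ++ List.replicate j ((0 : EuclideanSpace ℝ (Fin n)),
              (0 : EuclideanSpace ℝ (Fin n)), (1 : ℝ))) := by
      rw [hLdef, List.map_append, List.map_append, List.map_map, List.map_map,
        List.map_replicate]
      rfl
    have hctXi : ctXi L = A.length := by
      rw [hLdef]
      unfold ctXi
      rw [List.countP_append, List.countP_append, List.countP_map, List.countP_map,
        countP_replicate, List.countP_eq_zero.2 (fun a _ => by simp),
        List.countP_eq_length.2 (fun a _ => by simp)]
      simp
    have hctTau : ctTau L = j := by
      rw [hLdef]
      unfold ctTau
      rw [List.countP_append, List.countP_append, List.countP_map, List.countP_map,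
        countP_replicate, List.countP_eq_zero.2 (fun a _ => by simp),
        List.countP_eq_zero.2 (fun a _ => by simp)]
      simp
    have hctNT : ctNT L = B.length + A.length := by
      rw [hLdef]
      unfold ctNT
      rw [List.countP_append, List.countP_append, List.countP_map, List.countP_map,
        countP_replicate, List.countP_eq_length.2 (fun a _ => by simp),
        List.countP_eq_length.2 (fun a _ => by simp)]
      simp
    obtain ⟨C, hC0, hC⟩ := main_aux d hd hp hest c hc hlow L
    refine ⟨C, fun x ξ τ => ?_⟩
    have hz := hC (x, ξ, τ)
    rw [hList] at hz
    refine hz.trans ?_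
    apply mul_le_mul_of_nonneg_left _ hC0
    have hJ0 : 0 < jap ξ := jap_pos ξ
    have hK0 : 0 < kap d ξ τ := kap_pos d ξ τ hd
    show Bnd d L (x, ξ, τ) ≤ _
    unfold Bnd
    by_cases hNT : ctNT L = 0
    · have hA0 : A.length = 0 := by omega
      have hm : mR L = 0 := by unfold mR; rw [if_pos hNT]
      rw [hm, hctXi, hctTau, hA0]
      push_cast
      exact final_case0 hJ0 hK0 (j : ℝ)
    · have hm : mR L = 1 := by unfold mR; rw [if_neg hNT]
      rw [hm, hctXi, hctTau]
      exact final_case1 hK0 _ _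
end

section
/- Let d > 0, m, m', ν, ν' ∈ ℝ. If h belongs to the anisotropic symbol class S^{m,ν}_{1,0} and h' belongs to S^{m',ν'}_{1,0}, then the pointwise product h·h' belongs to S^{m'',ν''}_{1,0}, where m'' = m + m' and ν'' = min{ν, ν', ν + ν'}. -/
namespace StmtAux

def splits {E : Type*} : List E → List (List E × List E)
  | [] => [([], [])]
  | v :: L => (splits L).flatMap (fun p => [(v :: p.1, p.2), (p.1, v :: p.2)])

variable {E : Type*} [NormedAddCommGroup E] [NormedSpace ℝ E]

theorem dLine_contDiff {F : Type*} [NormedAddCommGroup F] [NormedSpace ℝ F]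
    {f : E → F} (hf : ContDiff ℝ (⊤ : ℕ∞) f) (L : List E) :
    ContDiff ℝ (⊤ : ℕ∞) (dLine L f) := by
  induction L with
  | nil => exact hf
  | cons v L ih =>
    show ContDiff ℝ (⊤ : ℕ∞) fun x => fderiv ℝ (dLine L f) x v
    exact (ih.fderiv_right (by exact_mod_cast le_top)).clm_apply contDiff_const

theorem differentiableAt_list_sum {F : Type*} [NormedAddCommGroup F] [NormedSpace ℝ F]
    {ι : Type*} (l : List ι) (G : ι → E → F) {x : E}
    (hG : ∀ i ∈ l, DifferentiableAt ℝ (G i) x) :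
    DifferentiableAt ℝ (fun y => (l.map (fun i => G i y)).sum) x := by
  induction l with
  | nil => simpa using differentiableAt_const (0 : F)
  | cons i l ih =>
    simp only [List.map_cons, List.sum_cons]
    exact (hG i (by simp)).add (ih fun j hj => hG j (by simp [hj]))

theorem fderiv_list_sum_apply {F : Type*} [NormedAddCommGroup F] [NormedSpace ℝ F]
    {ι : Type*} (l : List ι) (G : ι → E → F) {x : E} (v : E)
    (hG : ∀ i ∈ l, DifferentiableAt ℝ (G i) x) :
    fderiv ℝ (fun y => (l.map (fun i => G i y)).sum) x v
      = (l.map (fun i => fderiv ℝ (G i) x v)).sum := by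
  induction l with
  | nil => simp
  | cons i l ih =>
    simp only [List.map_cons, List.sum_cons]
    rw [fderiv_fun_add (hG i (by simp))
      (differentiableAt_list_sum l G fun j hj => hG j (by simp [hj]))]
    simp [ih fun j hj => hG j (by simp [hj])]

/-- Leibniz rule for iterated directional derivatives. -/
theorem dLine_mul {f g : E → ℂ} (hf : ContDiff ℝ (⊤ : ℕ∞) f) (hg : ContDiff ℝ (⊤ : ℕ∞) g)
    (L : List E) (x : E) :
    dLine L (fun y => f y * g y) x
      = ((splits L).map (fun p => dLine p.1 f x * dLine p.2 g x)).sum := by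
  induction L generalizing x with
  | nil => simp [splits, dLine]
  | cons v L ih =>
    have hrw : dLine L (fun y => f y * g y)
        = fun y => ((splits L).map (fun p => dLine p.1 f y * dLine p.2 g y)).sum :=
      funext fun y => ih y
    show fderiv ℝ (dLine L (fun y => f y * g y)) x v = _
    rw [hrw]
    have hdiff : ∀ p ∈ splits L,
        DifferentiableAt ℝ (fun y => dLine p.1 f y * dLine p.2 g y) x := fun p _ =>
      ((dLine_contDiff hf p.1).differentiable (by simp) x).mul
        ((dLine_contDiff hg p.2).differentiable (by simp) x)
    rw [fderiv_list_sum_apply (splits L)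
      (fun p => fun y => dLine p.1 f y * dLine p.2 g y) v hdiff]
    have hterm : ∀ p ∈ splits L,
        fderiv ℝ (fun y => dLine p.1 f y * dLine p.2 g y) x v
          = dLine (v :: p.1) f x * dLine p.2 g x + dLine p.1 f x * dLine (v :: p.2) g x := by
      intro p _
      have h1 : DifferentiableAt ℝ (dLine p.1 f) x :=
        (dLine_contDiff hf p.1).differentiable (by simp) x
      have h2 : DifferentiableAt ℝ (dLine p.2 g) x :=
        (dLine_contDiff hg p.2).differentiable (by simp) x
      rw [fderiv_fun_mul h1 h2]
      show dLine p.1 f x • fderiv ℝ (dLine p.2 g) x v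
          + dLine p.2 g x • fderiv ℝ (dLine p.1 f) x v = _
      show dLine p.1 f x * fderiv ℝ (dLine p.2 g) x v
          + dLine p.2 g x * fderiv ℝ (dLine p.1 f) x v = _
      show _ = fderiv ℝ (dLine p.1 f) x v * dLine p.2 g x
          + dLine p.1 f x * fderiv ℝ (dLine p.2 g) x v
      ring
    calc ((splits L).map (fun p =>
            fderiv ℝ (fun y => dLine p.1 f y * dLine p.2 g y) x v)).sum
        = ((splits L).map (fun p =>
            dLine (v :: p.1) f x * dLine p.2 g x
              + dLine p.1 f x * dLine (v :: p.2) g x)).sum := by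
          congr 1
          exact List.map_congr_left hterm
      _ = ((splits (v :: L)).map (fun p => dLine p.1 f x * dLine p.2 g x)).sum := by
          simp only [splits, List.map_flatMap]
          induction splits L with
          | nil => simp
          | cons q l ihq =>
            simp only [List.map_cons, List.sum_cons, List.flatMap_cons, List.sum_append,
              ihq]
            simp



theorem mem_splits_cons_left {E : Type*} {L : List E} {q : List E × List E}
    (hq : q ∈ splits L) (v : E) : (v :: q.1, q.2) ∈ splits (v :: L) := by
  simp only [splits]
  exact List.mem_flatMap.2 ⟨q, hq, by simp⟩

theorem mem_splits_cons_right {E : Type*} {L : List E} {q : List E × List E}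
    (hq : q ∈ splits L) (v : E) : (q.1, v :: q.2) ∈ splits (v :: L) := by
  simp only [splits]
  exact List.mem_flatMap.2 ⟨q, hq, by simp⟩

theorem splits_length {E : Type*} {L : List E} {p : List E × List E} (hp : p ∈ splits L) :
    p.1.length + p.2.length = L.length := by
  induction L generalizing p with
  | nil => simp [splits] at hp; simp [hp]
  | cons v L ih =>
    simp only [splits, List.mem_flatMap, List.mem_cons, List.mem_singleton] at hp
    obtain ⟨q, hq, hpq⟩ := hp
    have hlen := ih hq
    rcases hpq with rfl | rfl | hF
    · simp; omega
    · simp; omega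
    · simp at hF

theorem splits_append {E : Type*} {L1 L2 : List E} {p : List E × List E}
    (hp : p ∈ splits (L1 ++ L2)) :
    ∃ q1 ∈ splits L1, ∃ q2 ∈ splits L2,
      p = (q1.1 ++ q2.1, q1.2 ++ q2.2) := by
  induction L1 generalizing p with
  | nil =>
    exact ⟨([], []), by simp [splits], p, by simpa using hp, by simp⟩
  | cons v L1 ih =>
    simp only [List.cons_append, splits, List.mem_flatMap, List.mem_cons,
      List.mem_singleton] at hp
    obtain ⟨q, hq, hpq⟩ := hp
    obtain ⟨q1, hq1, q2, hq2, rfl⟩ := ih hq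
    rcases hpq with rfl | rfl | hF
    · exact ⟨(v :: q1.1, q1.2), mem_splits_cons_left hq1 v, q2, hq2, by simp⟩
    · exact ⟨(q1.1, v :: q1.2), mem_splits_cons_right hq1 v, q2, hq2, by simp⟩
    · simp at hF

theorem splits_map {E F : Type*} (f : E → F) {L : List E} {p : List F × List F}
    (hp : p ∈ splits (L.map f)) :
    ∃ q ∈ splits L, p = (q.1.map f, q.2.map f) := by
  induction L generalizing p with
  | nil => exact ⟨([], []), by simp [splits], by simpa [splits] using hp⟩
  | cons v L ih =>
    simp only [List.map_cons, splits, List.mem_flatMap, List.mem_cons,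
      List.mem_singleton] at hp
    obtain ⟨q, hq, hpq⟩ := hp
    obtain ⟨r, hr, rfl⟩ := ih hq
    rcases hpq with rfl | rfl | hF
    · exact ⟨(v :: r.1, r.2), mem_splits_cons_left hr v, by simp⟩
    · exact ⟨(r.1, v :: r.2), mem_splits_cons_right hr v, by simp⟩
    · simp at hF

theorem splits_replicate {E : Type*} (v : E) {j : ℕ} {p : List E × List E}
    (hp : p ∈ splits (List.replicate j v)) :
    ∃ j1 j2 : ℕ, j1 + j2 = j ∧ p = (List.replicate j1 v, List.replicate j2 v) := by
  induction j generalizing p with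
  | zero => exact ⟨0, 0, rfl, by simpa [splits] using hp⟩
  | succ k ih =>
    simp only [List.replicate_succ, splits, List.mem_flatMap, List.mem_cons,
      List.mem_singleton] at hp
    obtain ⟨q, hq, hpq⟩ := hp
    obtain ⟨j1, j2, hj, rfl⟩ := ih hq
    rcases hpq with rfl | rfl | hF
    · exact ⟨j1 + 1, j2, by omega, by simp [List.replicate_succ]⟩
    · exact ⟨j1, j2 + 1, by omega, by simp [List.replicate_succ]⟩
    · simp at hF


theorem one_le_jap {n : ℕ} (ξ : EuclideanSpace ℝ (Fin n)) : 1 ≤ jap ξ :=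
  Real.one_le_rpow (by nlinarith [sq_nonneg ‖ξ‖]) (by norm_num)

theorem jap_le_kap {n : ℕ} {d : ℝ} (hd : 0 < d) (ξ : EuclideanSpace ℝ (Fin n)) (τ : ℝ) :
    jap ξ ≤ kap d ξ τ := by
  have hj0 : (0:ℝ) < jap ξ := lt_of_lt_of_le one_pos (one_le_jap ξ)
  have h1 : jap ξ = (jap ξ ^ (2 * d)) ^ (1 / (2 * d)) := by
    rw [← Real.rpow_mul hj0.le]
    rw [show (2 * d) * (1 / (2 * d)) = 1 by field_simp]
    exact (Real.rpow_one _).symm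
  rw [h1, kap]
  exact Real.rpow_le_rpow (Real.rpow_nonneg hj0.le _)
    (by nlinarith [sq_nonneg τ]) (by positivity)

/-- The key pointwise numeric estimate for the product of two symbol bounds. -/
theorem key_est {J K : ℝ} (hJ : 1 ≤ J) (hJK : J ≤ K)
    {ν ν' m m' d k1 k2 j1 j2 : ℝ} (hk1 : 0 ≤ k1) (hk2 : 0 ≤ k2) :
    ((J ^ (ν - k1) + K ^ (ν - k1)) * K ^ (m - ν - d * j1)) *
      ((J ^ (ν' - k2) + K ^ (ν' - k2)) * K ^ (m' - ν' - d * j2))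
    ≤ 4 * ((J ^ (min (min ν ν') (ν + ν') - (k1 + k2))
          + K ^ (min (min ν ν') (ν + ν') - (k1 + k2)))
        * K ^ (m + m' - min (min ν ν') (ν + ν') - d * (j1 + j2))) := by
  have hJ0 : (0:ℝ) < J := lt_of_lt_of_le one_pos hJ
  have hK0 : (0:ℝ) < K := lt_of_lt_of_le hJ0 hJK
  set ν'' := min (min ν ν') (ν + ν') with hν''
  have hv1 : ν'' ≤ ν := le_trans (min_le_left _ _) (min_le_left _ _)
  have hv2 : ν'' ≤ ν' := le_trans (min_le_left _ _) (min_le_right _ _)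
  have hv3 : ν'' ≤ ν + ν' := min_le_right _ _
  set b := ν'' - (k1 + k2) with hb
  set c := ν + ν' - ν'' with hc
  have hc0 : 0 ≤ c := by simp [hc]; linarith
  -- the four elementary term bounds
  have t11 : J ^ (ν - k1) * J ^ (ν' - k2) ≤ J ^ b * K ^ c := by
    rw [← Real.rpow_add hJ0, show ν - k1 + (ν' - k2) = b + c by simp [hb, hc]; ring,
      Real.rpow_add hJ0]
    exact mul_le_mul_of_nonneg_left (Real.rpow_le_rpow hJ0.le hJK hc0)
      (Real.rpow_nonneg hJ0.le _)
  have t12 : J ^ (ν - k1) * K ^ (ν' - k2) ≤ J ^ b * K ^ c := by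
    have he : 0 ≤ ν + k2 - ν'' := by linarith
    calc J ^ (ν - k1) * K ^ (ν' - k2)
        = (J ^ b * J ^ (ν + k2 - ν'')) * K ^ (ν' - k2) := by
          rw [← Real.rpow_add hJ0]; congr 1; simp only [hb]; ring
      _ ≤ (J ^ b * K ^ (ν + k2 - ν'')) * K ^ (ν' - k2) := by
          apply mul_le_mul_of_nonneg_right _ (Real.rpow_nonneg hK0.le _)
          exact mul_le_mul_of_nonneg_left (Real.rpow_le_rpow hJ0.le hJK he)
            (Real.rpow_nonneg hJ0.le _)
      _ = J ^ b * K ^ c := by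
          rw [mul_assoc, ← Real.rpow_add hK0]; congr 2; simp only [hc]; ring
  have t21 : K ^ (ν - k1) * J ^ (ν' - k2) ≤ J ^ b * K ^ c := by
    have he : 0 ≤ ν' + k1 - ν'' := by linarith
    calc K ^ (ν - k1) * J ^ (ν' - k2)
        = (J ^ b * J ^ (ν' + k1 - ν'')) * K ^ (ν - k1) := by
          rw [← Real.rpow_add hJ0]; rw [mul_comm]; congr 2; simp only [hb]; ring
      _ ≤ (J ^ b * K ^ (ν' + k1 - ν'')) * K ^ (ν - k1) := by
          apply mul_le_mul_of_nonneg_right _ (Real.rpow_nonneg hK0.le _)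
          exact mul_le_mul_of_nonneg_left (Real.rpow_le_rpow hJ0.le hJK he)
            (Real.rpow_nonneg hJ0.le _)
      _ = J ^ b * K ^ c := by
          rw [mul_assoc, ← Real.rpow_add hK0]; congr 2; simp only [hc]; ring
  have t22 : K ^ (ν - k1) * K ^ (ν' - k2) ≤ K ^ b * K ^ c := by
    rw [← Real.rpow_add hK0, ← Real.rpow_add hK0,
      show ν - k1 + (ν' - k2) = b + c by simp [hb, hc]; ring]
  -- combine
  have hsum : (J ^ (ν - k1) + K ^ (ν - k1)) * (J ^ (ν' - k2) + K ^ (ν' - k2))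
      ≤ 4 * ((J ^ b + K ^ b) * K ^ c) := by
    have hJb : 0 ≤ J ^ b := Real.rpow_nonneg hJ0.le _
    have hKb : 0 ≤ K ^ b := Real.rpow_nonneg hK0.le _
    have hKc : 0 ≤ K ^ c := Real.rpow_nonneg hK0.le _
    nlinarith [t11, t12, t21, t22, mul_nonneg hJb hKc, mul_nonneg hKb hKc]
  calc ((J ^ (ν - k1) + K ^ (ν - k1)) * K ^ (m - ν - d * j1)) *
        ((J ^ (ν' - k2) + K ^ (ν' - k2)) * K ^ (m' - ν' - d * j2))
      = ((J ^ (ν - k1) + K ^ (ν - k1)) * (J ^ (ν' - k2) + K ^ (ν' - k2)))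
          * K ^ (m + m' - ν - ν' - d * (j1 + j2)) := by
        rw [show m + m' - ν - ν' - d * (j1 + j2)
            = (m - ν - d * j1) + (m' - ν' - d * j2) by ring, Real.rpow_add hK0]
        ring
    _ ≤ (4 * ((J ^ b + K ^ b) * K ^ c)) * K ^ (m + m' - ν - ν' - d * (j1 + j2)) := by
        apply mul_le_mul_of_nonneg_right hsum (Real.rpow_nonneg hK0.le _)
    _ = 4 * ((J ^ b + K ^ b) * K ^ (m + m' - ν'' - d * (j1 + j2))) := by
        rw [show m + m' - ν'' - d * (j1 + j2)
            = c + (m + m' - ν - ν' - d * (j1 + j2)) by simp only [hc]; ring,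
          Real.rpow_add hK0]
        ring

theorem norm_list_sum_le {F : Type*} [SeminormedAddCommGroup F] (l : List F) :
    ‖l.sum‖ ≤ (l.map (fun a => ‖a‖)).sum := by
  induction l with
  | nil => simp
  | cons a l ih =>
    simp only [List.sum_cons, List.map_cons]
    exact le_trans (norm_add_le _ _) (by linarith)

theorem exists_uniform_bound {α : Type*} (l : List α) (P : α → ℝ → Prop)
    (mono : ∀ a C C', C ≤ C' → P a C → P a C')
    (H : ∀ a ∈ l, ∃ C, P a C) : ∃ C, ∀ a ∈ l, P a C := by
  induction l with
  | nil => exact ⟨0, by simp⟩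
  | cons a l ih =>
    obtain ⟨C1, hC1⟩ := H a (by simp)
    obtain ⟨C2, hC2⟩ := ih fun b hb => H b (by simp [hb])
    refine ⟨max C1 C2, ?_⟩
    intro b hb
    rcases List.mem_cons.1 hb with rfl | hb
    · exact mono _ _ _ (le_max_left _ _) hC1
    · exact mono _ _ _ (le_max_right _ _) (hC2 b hb)


end StmtAux

/-- The pointwise product of an anisotropic symbol of order/regularity `(m,ν)` with one of
order/regularity `(m',ν')` is an anisotropic symbol of order `m'' = m + m'` and regularity
number `ν'' = min{ν, ν', ν + ν'}`. -/
theorem stmt_4 {n : ℕ} (d m m' ν ν' : ℝ) (hd : 0 < d)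
    (h h' : EuclideanSpace ℝ (Fin n) × EuclideanSpace ℝ (Fin n) × ℝ → ℂ)
    (hh : IsAnisoSymbol n d m ν h) (hh' : IsAnisoSymbol n d m' ν' h') :
    IsAnisoSymbol n d (m + m') (min (min ν ν') (ν + ν')) (fun q => h q * h' q) := by
  classical
  obtain ⟨hsm, hbd⟩ := hh
  obtain ⟨hsm', hbd'⟩ := hh'
  refine ⟨hsm.mul hsm', ?_⟩
  intro B A j
  set xv : Fin n → EuclideanSpace ℝ (Fin n) × EuclideanSpace ℝ (Fin n) × ℝ := fun i =>
    ((EuclideanSpace.single i 1 : EuclideanSpace ℝ (Fin n)),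
      (0 : EuclideanSpace ℝ (Fin n)), (0 : ℝ)) with hxv
  set ξv : Fin n → EuclideanSpace ℝ (Fin n) × EuclideanSpace ℝ (Fin n) × ℝ := fun i =>
    ((0 : EuclideanSpace ℝ (Fin n)),
      (EuclideanSpace.single i 1 : EuclideanSpace ℝ (Fin n)), (0 : ℝ)) with hξv
  set τv : EuclideanSpace ℝ (Fin n) × EuclideanSpace ℝ (Fin n) × ℝ :=
    ((0 : EuclideanSpace ℝ (Fin n)), (0 : EuclideanSpace ℝ (Fin n)), (1 : ℝ)) with hτv
  set bigL := B.map xv ++ A.map ξv ++ List.replicate j τv with hbigL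
  set ν'' := min (min ν ν') (ν + ν') with hν''
  set T : EuclideanSpace ℝ (Fin n) → EuclideanSpace ℝ (Fin n) → ℝ → ℝ := fun _x ξ τ =>
    (jap ξ ^ (ν'' - (A.length : ℝ)) + kap d ξ τ ^ (ν'' - (A.length : ℝ)))
      * kap d ξ τ ^ (m + m' - ν'' - d * (j : ℝ)) with hT
  have hTnn : ∀ (x ξ : EuclideanSpace ℝ (Fin n)) (τ : ℝ), 0 ≤ T x ξ τ := by
    intro x ξ τ
    have hj0 : (0:ℝ) < jap ξ := lt_of_lt_of_le one_pos (StmtAux.one_le_jap ξ)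
    have hk0 : (0:ℝ) < kap d ξ τ := lt_of_lt_of_le hj0 (StmtAux.jap_le_kap hd ξ τ)
    have h1 := Real.rpow_nonneg hj0.le (ν'' - (A.length : ℝ))
    have h2 := Real.rpow_nonneg hk0.le (ν'' - (A.length : ℝ))
    have h3 := Real.rpow_nonneg hk0.le (m + m' - ν'' - d * (j : ℝ))
    simp only [hT]
    positivity
  -- uniform bound over all splits
  have key : ∀ p ∈ StmtAux.splits bigL, ∃ C : ℝ,
      ∀ (x ξ : EuclideanSpace ℝ (Fin n)) (τ : ℝ),
      ‖dLine p.1 h (x, ξ, τ)‖ * ‖dLine p.2 h' (x, ξ, τ)‖ ≤ C * T x ξ τ := by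
    intro p hp
    rw [hbigL] at hp
    obtain ⟨q1, hq1, q2, hq2, rfl⟩ := StmtAux.splits_append hp
    obtain ⟨r1, hr1, r2, hr2, hq1eq⟩ := StmtAux.splits_append hq1
    obtain ⟨B12, hB12, hr1eq⟩ := StmtAux.splits_map xv hr1
    obtain ⟨A12, hA12, hr2eq⟩ := StmtAux.splits_map ξv hr2
    obtain ⟨j1, j2, hj12, hq2eq⟩ := StmtAux.splits_replicate τv hq2
    obtain ⟨C1, hC1⟩ := hbd B12.1 A12.1 j1
    obtain ⟨C2, hC2⟩ := hbd' B12.2 A12.2 j2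
    have hA : (A12.1.length : ℝ) + (A12.2.length : ℝ) = (A.length : ℝ) := by
      have := StmtAux.splits_length hA12
      push_cast [← this]; ring
    have hjj : (j1 : ℝ) + (j2 : ℝ) = (j : ℝ) := by push_cast [← hj12]; ring
    refine ⟨4 * (max C1 0 * max C2 0), ?_⟩
    intro x ξ τ
    have h1le : 1 ≤ jap ξ := StmtAux.one_le_jap ξ
    have hjk : jap ξ ≤ kap d ξ τ := StmtAux.jap_le_kap hd ξ τ
    have hj0 : (0:ℝ) < jap ξ := lt_of_lt_of_le one_pos h1le
    have hk0 : (0:ℝ) < kap d ξ τ := lt_of_lt_of_le hj0 hjk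
    set S1 : ℝ := (jap ξ ^ (ν - (A12.1.length : ℝ)) + kap d ξ τ ^ (ν - (A12.1.length : ℝ)))
      * kap d ξ τ ^ (m - ν - d * (j1 : ℝ)) with hS1
    set S2 : ℝ := (jap ξ ^ (ν' - (A12.2.length : ℝ)) + kap d ξ τ ^ (ν' - (A12.2.length : ℝ)))
      * kap d ξ τ ^ (m' - ν' - d * (j2 : ℝ)) with hS2
    have hS1nn : 0 ≤ S1 := by
      have u1 := Real.rpow_nonneg hj0.le (ν - (A12.1.length : ℝ))
      have u2 := Real.rpow_nonneg hk0.le (ν - (A12.1.length : ℝ))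
      have u3 := Real.rpow_nonneg hk0.le (m - ν - d * (j1 : ℝ))
      rw [hS1]; positivity
    have hS2nn : 0 ≤ S2 := by
      have u1 := Real.rpow_nonneg hj0.le (ν' - (A12.2.length : ℝ))
      have u2 := Real.rpow_nonneg hk0.le (ν' - (A12.2.length : ℝ))
      have u3 := Real.rpow_nonneg hk0.le (m' - ν' - d * (j2 : ℝ))
      rw [hS2]; positivity
    have hb1 : ‖dLine (q1.1 ++ q2.1) h (x, ξ, τ)‖ ≤ max C1 0 * S1 := by
      simp only [hq1eq, hq2eq, hr1eq, hr2eq]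
      exact le_trans (hC1 x ξ τ)
        (mul_le_mul_of_nonneg_right (le_max_left _ _) hS1nn)
    have hb2 : ‖dLine (q1.2 ++ q2.2) h' (x, ξ, τ)‖ ≤ max C2 0 * S2 := by
      simp only [hq1eq, hq2eq, hr1eq, hr2eq]
      exact le_trans (hC2 x ξ τ)
        (mul_le_mul_of_nonneg_right (le_max_left _ _) hS2nn)
    calc ‖dLine (q1.1 ++ q2.1, q1.2 ++ q2.2).1 h (x, ξ, τ)‖
          * ‖dLine (q1.1 ++ q2.1, q1.2 ++ q2.2).2 h' (x, ξ, τ)‖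
        = ‖dLine (q1.1 ++ q2.1) h (x, ξ, τ)‖ * ‖dLine (q1.2 ++ q2.2) h' (x, ξ, τ)‖ := rfl
      _ ≤ (max C1 0 * S1) * (max C2 0 * S2) := by
          apply mul_le_mul hb1 hb2 (norm_nonneg _)
          exact mul_nonneg (le_max_right _ _) hS1nn
      _ = (max C1 0 * max C2 0) * (S1 * S2) := by ring
      _ ≤ (max C1 0 * max C2 0) * (4 * T x ξ τ) := by
          apply mul_le_mul_of_nonneg_left _
            (mul_nonneg (le_max_right _ _) (le_max_right _ _))
          have hke := StmtAux.key_est h1le hjk (ν := ν) (ν' := ν') (m := m) (m' := m')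
            (d := d) (k1 := (A12.1.length : ℝ)) (k2 := (A12.2.length : ℝ))
            (j1 := (j1 : ℝ)) (j2 := (j2 : ℝ)) (Nat.cast_nonneg _) (Nat.cast_nonneg _)
          calc S1 * S2 ≤ 4 * ((jap ξ ^ (ν'' - ((A12.1.length : ℝ) + (A12.2.length : ℝ)))
                + kap d ξ τ ^ (ν'' - ((A12.1.length : ℝ) + (A12.2.length : ℝ))))
              * kap d ξ τ ^ (m + m' - ν'' - d * ((j1 : ℝ) + (j2 : ℝ)))) := by
                rw [hS1, hS2, hν'']; exact hke
            _ = 4 * T x ξ τ := by rw [hT, hA, hjj]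
      _ = 4 * (max C1 0 * max C2 0) * T x ξ τ := by ring
  obtain ⟨C0, hC0⟩ := StmtAux.exists_uniform_bound (StmtAux.splits bigL) _
    (fun p C C' hCC hP x ξ τ =>
      le_trans (hP x ξ τ) (mul_le_mul_of_nonneg_right hCC (hTnn x ξ τ))) key
  refine ⟨(StmtAux.splits bigL).length * C0, ?_⟩
  intro x ξ τ
  have hexp := StmtAux.dLine_mul hsm hsm' bigL (x, ξ, τ)
  calc ‖dLine bigL (fun q => h q * h' q) (x, ξ, τ)‖
      = ‖((StmtAux.splits bigL).map
          (fun p => dLine p.1 h (x, ξ, τ) * dLine p.2 h' (x, ξ, τ))).sum‖ := by rw [hexp]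
    _ ≤ (((StmtAux.splits bigL).map
          (fun p => dLine p.1 h (x, ξ, τ) * dLine p.2 h' (x, ξ, τ))).map
            (fun a => ‖a‖)).sum := StmtAux.norm_list_sum_le _
    _ = ((StmtAux.splits bigL).map
          (fun p => ‖dLine p.1 h (x, ξ, τ)‖ * ‖dLine p.2 h' (x, ξ, τ)‖)).sum := by
        rw [List.map_map]
        exact congrArg List.sum (List.map_congr_left fun p _ => by simp [norm_mul])
    _ ≤ ((StmtAux.splits bigL).map
          (fun p => ‖dLine p.1 h (x, ξ, τ)‖ * ‖dLine p.2 h' (x, ξ, τ)‖)).length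
          • (C0 * T x ξ τ) := by
        apply List.sum_le_card_nsmul
        intro a ha
        obtain ⟨p, hp, rfl⟩ := List.mem_map.1 ha
        exact hC0 p hp x ξ τ
    _ = (StmtAux.splits bigL).length * C0 * T x ξ τ := by
        rw [List.length_map, nsmul_eq_mul]; ring
    _ = ((StmtAux.splits bigL).length * C0) *
        ((jap ξ ^ (ν'' - (A.length : ℝ)) + kap d ξ τ ^ (ν'' - (A.length : ℝ)))
          * kap d ξ τ ^ (m + m' - ν'' - d * (j : ℝ))) := by rw [hT]
end

section
/- Let n ≥ 1, 0 < a < 1, let Ω ⊂ ℝⁿ be a bounded measurable set, and let k : S^{n-1} → ℝ be measurable with k(θ) ≥ k₀ > 0 for all θ ∈ S^{n-1}. Then there exists c > 0 such that for every u ∈ L²(ℝⁿ, ℝ) with u = 0 almost everywhere outside Ω, ½ ∫∫_{ℝⁿ×ℝⁿ} |u(x) − u(y)|² k((x−y)/|x−y|) |x−y|^{-n-2a} dx dy ≥ c ∫_{ℝⁿ} |u(x)|² dx (where the left-hand side may be +∞). This fractional Poincaré inequality gives the positive lower bound of the Dirichlet form Q used to make the Dirichlet realization P_{Dir,2} bijective.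 -/
open MeasureTheory

/-- Fractional Poincaré inequality: for `Ω ⊂ ℝⁿ` bounded measurable and
`k ≥ k₀ > 0` on the unit sphere, there is `c > 0` such that every `u ∈ L²(ℝⁿ,ℝ)`
vanishing a.e. outside `Ω` satisfies
`½ ∫∫ |u(x)−u(y)|² k((x−y)/|x−y|)|x−y|^{-n-2a} dx dy ≥ c ∫ |u|²`
(the left-hand side may be `+∞`). -/
theorem stmt_16 {n : ℕ} (hn : 1 ≤ n) (a : ℝ) (ha0 : 0 < a) (ha1 : a < 1)
    (Ω : Set (EuclideanSpace ℝ (Fin n))) (hΩb : Bornology.IsBounded Ω)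
    (hΩm : MeasurableSet Ω)
    (k : EuclideanSpace ℝ (Fin n) → ℝ) (hk : Measurable k)
    (k₀ : ℝ) (hk₀ : 0 < k₀) (hkl : ∀ θ : EuclideanSpace ℝ (Fin n), ‖θ‖ = 1 → k₀ ≤ k θ) :
    ∃ c : ℝ, 0 < c ∧ ∀ u : EuclideanSpace ℝ (Fin n) → ℝ,
      MemLp u 2 volume → (∀ᵐ x, x ∉ Ω → u x = 0) →
        ENNReal.ofReal c * ∫⁻ x : EuclideanSpace ℝ (Fin n), ENNReal.ofReal (u x ^ 2)
          ≤ ENNReal.ofReal (1 / 2) *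
              ∫⁻ q : EuclideanSpace ℝ (Fin n) × EuclideanSpace ℝ (Fin n),
                ENNReal.ofReal (|u q.1 - u q.2| ^ 2 *
                  (k (‖q.1 - q.2‖⁻¹ • (q.1 - q.2)) * ‖q.1 - q.2‖ ^ (-(n : ℝ) - 2 * a))) := by
  obtain ⟨R, hR1, hΩR⟩ : ∃ R : ℝ, 1 ≤ R ∧ Ω ⊆ Metric.closedBall 0 R := by
    obtain ⟨r, hr⟩ := hΩb.subset_closedBall 0
    exact ⟨max r 1, le_max_right _ _,
      hr.trans (Metric.closedBall_subset_closedBall (le_max_left _ _))⟩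
  have hR0 : (0:ℝ) < R := lt_of_lt_of_le one_pos hR1
  set p : EuclideanSpace ℝ (Fin n) :=
    (5 * R / 2) • EuclideanSpace.single (⟨0, hn⟩ : Fin n) (1:ℝ) with hp_def
  have hp : ‖p‖ = 5 * R / 2 := by
    rw [hp_def, norm_smul, EuclideanSpace.norm_single]
    simp [Real.norm_eq_abs]
    exact hR0.le
  set Y : Set (EuclideanSpace ℝ (Fin n)) := Metric.ball p (R / 2) with hY_def
  set B : Set (EuclideanSpace ℝ (Fin n)) := Metric.closedBall 0 R with hB_def
  have hYnorm : ∀ y ∈ Y, 2 * R ≤ ‖y‖ ∧ ‖y‖ ≤ 3 * R := by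
    intro y hy
    have h1 : ‖y - p‖ < R / 2 := by
      simpa [dist_eq_norm] using (Metric.mem_ball.mp hy)
    have h2 : ‖p‖ - ‖y‖ ≤ ‖p - y‖ := norm_sub_norm_le p y
    have h3 : ‖y‖ - ‖p‖ ≤ ‖y - p‖ := norm_sub_norm_le y p
    rw [norm_sub_rev] at h2
    constructor <;> linarith
  have hYΩ : ∀ y ∈ Y, y ∉ Ω := by
    intro y hy hmem
    have : ‖y‖ ≤ R := by simpa [hB_def] using mem_closedBall_zero_iff.mp (hΩR hmem)
    linarith [(hYnorm y hy).1]
  set κ : ℝ := (4 * R) ^ (-(n:ℝ) - 2*a) with hκ_def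
  have hκ : 0 < κ := Real.rpow_pos_of_pos (by positivity) _
  have hYvol_pos : 0 < volume Y := Metric.measure_ball_pos _ _ (by positivity)
  have hYvol_lt : volume Y < ⊤ := measure_ball_lt_top
  set m : ℝ := (volume Y).toReal with hm_def
  have hm : 0 < m := ENNReal.toReal_pos hYvol_pos.ne' hYvol_lt.ne
  refine ⟨1/2 * (k₀ * κ) * m, by positivity, fun u hu hu0 => ?_⟩
  set f : EuclideanSpace ℝ (Fin n) → ENNReal := fun x => ENNReal.ofReal (u x ^ 2) with hf_def
  have hmu : AEMeasurable u volume := hu.aestronglyMeasurable.aemeasurable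
  have hf_meas : AEMeasurable f volume :=
    ENNReal.measurable_ofReal.comp_aemeasurable (hmu.pow_const 2)
  set G : EuclideanSpace ℝ (Fin n) × EuclideanSpace ℝ (Fin n) → ℝ := fun q =>
    |u q.1 - u q.2| ^ 2 *
      (k (‖q.1 - q.2‖⁻¹ • (q.1 - q.2)) * ‖q.1 - q.2‖ ^ (-(n : ℝ) - 2 * a)) with hG_def
  have hT : MeasurableSet (B ×ˢ Y) := measurableSet_closedBall.prod measurableSet_ball
  -- a.e. vanishing of u on the second factor of the product
  have hprod : ∀ᵐ q : EuclideanSpace ℝ (Fin n) × EuclideanSpace ℝ (Fin n) ∂volume,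
      q.2 ∉ Ω → u q.2 = 0 := by
    rw [Measure.volume_eq_prod]
    exact Measure.quasiMeasurePreserving_snd.ae hu0
  -- pointwise lower bound on the product set
  have hpoint : ∀ᵐ q ∂(volume.restrict (B ×ˢ Y)),
      f q.1 * ENNReal.ofReal (k₀ * κ) ≤ ENNReal.ofReal (G q) := by
    filter_upwards [ae_restrict_of_ae hprod, ae_restrict_mem hT] with q hq hqT
    obtain ⟨hx, hy⟩ := hqT
    have hxR : ‖q.1‖ ≤ R := by simpa [hB_def] using mem_closedBall_zero_iff.mp hx
    obtain ⟨hy2, hy3⟩ := hYnorm _ hy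
    have huy : u q.2 = 0 := hq (hYΩ _ hy)
    have ht1 : ‖q.2‖ - ‖q.1‖ ≤ ‖q.1 - q.2‖ := by
      have := norm_sub_norm_le q.2 q.1
      rwa [norm_sub_rev] at this
    have htpos : R ≤ ‖q.1 - q.2‖ := by linarith
    have ht4 : ‖q.1 - q.2‖ ≤ 4 * R := by
      have := norm_sub_le q.1 q.2
      linarith
    have ht0 : 0 < ‖q.1 - q.2‖ := lt_of_lt_of_le hR0 htpos
    have hd : ‖(‖q.1 - q.2‖⁻¹ • (q.1 - q.2) : EuclideanSpace ℝ (Fin n))‖ = 1 := by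
      rw [norm_smul, Real.norm_eq_abs, abs_inv, abs_of_pos ht0, inv_mul_cancel₀ ht0.ne']
    have hker : k₀ * κ ≤ k (‖q.1 - q.2‖⁻¹ • (q.1 - q.2)) * ‖q.1 - q.2‖ ^ (-(n : ℝ) - 2 * a) := by
      have h1 : k₀ ≤ k (‖q.1 - q.2‖⁻¹ • (q.1 - q.2)) := hkl _ hd
      have he : (-(n : ℝ) - 2 * a) ≤ 0 := by
        have : (1:ℝ) ≤ (n:ℝ) := by exact_mod_cast hn
        linarith
      have h2 : κ ≤ ‖q.1 - q.2‖ ^ (-(n : ℝ) - 2 * a) := by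
        rw [hκ_def]
        exact Real.rpow_le_rpow_of_nonpos ht0 ht4 he
      exact mul_le_mul h1 h2 hκ.le (le_trans hk₀.le h1)
    have hreal : u q.1 ^ 2 * (k₀ * κ) ≤ G q := by
      rw [hG_def]
      simp only [huy, sub_zero, sq_abs]
      exact mul_le_mul_of_nonneg_left hker (sq_nonneg _)
    calc f q.1 * ENNReal.ofReal (k₀ * κ)
        = ENNReal.ofReal (u q.1 ^ 2 * (k₀ * κ)) := by
          rw [ENNReal.ofReal_mul (sq_nonneg _)]
      _ ≤ ENNReal.ofReal (G q) := ENNReal.ofReal_le_ofReal hreal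
  -- computing the lower-bound integral
  have hf_fst : AEMeasurable (fun q : EuclideanSpace ℝ (Fin n) × EuclideanSpace ℝ (Fin n) =>
      f q.1) (volume.restrict (B ×ˢ Y)) := by
    refine AEMeasurable.mono_measure ?_ Measure.restrict_le_self
    rw [Measure.volume_eq_prod]
    exact hf_meas.comp_quasiMeasurePreserving Measure.quasiMeasurePreserving_fst
  have hcalc : ∫⁻ q in B ×ˢ Y, f q.1 * ENNReal.ofReal (k₀ * κ)
      = (∫⁻ x in B, f x) * volume Y * ENNReal.ofReal (k₀ * κ) := by
    rw [lintegral_mul_const'' _ hf_fst]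
    congr 1
    rw [Measure.volume_eq_prod, ← Measure.prod_restrict]
    have := lintegral_prod_mul (μ := volume.restrict B) (ν := volume.restrict Y)
      (f := f) (g := fun _ => (1:ENNReal))
      (hf_meas.mono_measure Measure.restrict_le_self) aemeasurable_const
    simpa [lintegral_one, Measure.restrict_apply_univ] using this
  have hBfull : ∫⁻ x in B, f x = ∫⁻ x, f x := by
    rw [← lintegral_add_compl f measurableSet_closedBall (μ := volume)]
    have hz : ∫⁻ x in Bᶜ, f x = 0 := by
      have : ∀ᵐ x ∂(volume.restrict Bᶜ), f x = 0 := by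
        filter_upwards [ae_restrict_of_ae hu0, ae_restrict_mem measurableSet_closedBall.compl]
          with x hx hxc
        have : x ∉ Ω := fun hmem => hxc (hΩR hmem)
        simp [hf_def, hx this]
      rw [lintegral_congr_ae this, lintegral_zero]
    rw [hB_def] at hz ⊢
    rw [hz, add_zero]
  -- assembling
  have hmain : (∫⁻ x, f x) * volume Y * ENNReal.ofReal (k₀ * κ)
      ≤ ∫⁻ q : EuclideanSpace ℝ (Fin n) × EuclideanSpace ℝ (Fin n), ENNReal.ofReal (G q) := by
    calc (∫⁻ x, f x) * volume Y * ENNReal.ofReal (k₀ * κ)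
        = ∫⁻ q in B ×ˢ Y, f q.1 * ENNReal.ofReal (k₀ * κ) := by rw [hcalc, hBfull]
      _ ≤ ∫⁻ q in B ×ˢ Y, ENNReal.ofReal (G q) := lintegral_mono_ae hpoint
      _ ≤ ∫⁻ q, ENNReal.ofReal (G q) := setLIntegral_le_lintegral _ _
  have hofc : ENNReal.ofReal (1/2 * (k₀ * κ) * m)
      = ENNReal.ofReal (1/2) * ENNReal.ofReal (k₀ * κ) * volume Y := by
    rw [ENNReal.ofReal_mul (by positivity), ENNReal.ofReal_mul (by norm_num),
      hm_def, ENNReal.ofReal_toReal hYvol_lt.ne]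
  calc ENNReal.ofReal (1/2 * (k₀ * κ) * m) * ∫⁻ x, f x
      = ENNReal.ofReal (1/2) * ((∫⁻ x, f x) * volume Y * ENNReal.ofReal (k₀ * κ)) := by
        rw [hofc]; ring
    _ ≤ ENNReal.ofReal (1/2) * ∫⁻ q, ENNReal.ofReal (G q) :=
        mul_le_mul_right hmain _
end

section
/- Let n ≥ 2 and t ∈ ℝ, and write ξ = (ξ', ξ_n) ∈ ℝ^{n-1}×ℝ. The function χ_+^t(ξ) = (⟨ξ'⟩ + iξ_n)^t (principal power) satisfies the following anisotropic estimates with d = 1, order m = t and regularity number ν = 1: for every multi-index α = (α', α_n) ∈ ℕ^{n-1}×ℕ there is a constant C_α such that |∂_{ξ'}^{α'} ∂_{ξ_n}^{α_n} χ_+^t(ξ)| ≤ C_α (⟨ξ'⟩^{1-|α'|} + ⟨ξ⟩^{1-|α'|}) ⟨ξ⟩^{t-1-α_n} for all ξ ∈ ℝⁿ. -/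
/-- `⟨ξ⟩ = (1 + |ξ'|² + ξ_n²)^{1/2}` for `ξ = (ξ', ξ_n) ∈ ℝ^{n-1} × ℝ`. -/
noncomputable def japF {m : ℕ} (ξ : EuclideanSpace ℝ (Fin m) × ℝ) : ℝ :=
  (1 + ‖ξ.1‖ ^ 2 + ξ.2 ^ 2) ^ ((1 : ℝ) / 2)

namespace Stmt19

open Complex Finset

variable {m : ℕ}

noncomputable def w (ξ : EuclideanSpace ℝ (Fin m) × ℝ) : ℂ :=
  ((jap ξ.1 : ℝ) : ℂ) + Complex.I * (ξ.2 : ℂ)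

noncomputable def mono (β : Fin m → ℕ) (x : EuclideanSpace ℝ (Fin m)) : ℝ :=
  ∏ i, x i ^ β i

noncomputable def term (β : Fin m → ℕ) (s a : ℝ) (ξ : EuclideanSpace ℝ (Fin m) × ℝ) : ℂ :=
  ((mono β ξ.1 * jap ξ.1 ^ s : ℝ) : ℂ) * w ξ ^ (a : ℂ)

lemma jap_pos (x : EuclideanSpace ℝ (Fin m)) : 0 < jap x :=
  Real.rpow_pos_of_pos (by positivity) _

lemma jap_sq (x : EuclideanSpace ℝ (Fin m)) : jap x ^ (2 : ℕ) = 1 + ‖x‖ ^ 2 := by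
  rw [jap, ← Real.rpow_natCast ((1 + ‖x‖ ^ 2) ^ ((1:ℝ)/2)) 2, ← Real.rpow_mul (by positivity)]
  norm_num

lemma one_le_jap (x : EuclideanSpace ℝ (Fin m)) : 1 ≤ jap x := by
  nlinarith [jap_sq x, jap_pos x, sq_nonneg ‖x‖]

lemma japF_pos (ξ : EuclideanSpace ℝ (Fin m) × ℝ) : 0 < japF ξ :=
  Real.rpow_pos_of_pos (by positivity) _

lemma japF_sq (ξ : EuclideanSpace ℝ (Fin m) × ℝ) : japF ξ ^ (2 : ℕ) = 1 + ‖ξ.1‖ ^ 2 + ξ.2 ^ 2 := by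
  rw [japF, ← Real.rpow_natCast ((1 + ‖ξ.1‖ ^ 2 + ξ.2 ^ 2) ^ ((1:ℝ)/2)) 2,
    ← Real.rpow_mul (by positivity)]
  norm_num

lemma one_le_japF (ξ : EuclideanSpace ℝ (Fin m) × ℝ) : 1 ≤ japF ξ := by
  nlinarith [japF_sq ξ, japF_pos ξ, sq_nonneg ‖ξ.1‖, sq_nonneg ξ.2]

lemma jap_le_japF (ξ : EuclideanSpace ℝ (Fin m) × ℝ) : jap ξ.1 ≤ japF ξ :=
  Real.rpow_le_rpow (by positivity) (by nlinarith [sq_nonneg ξ.2]) (by norm_num)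

lemma norm_le_jap (x : EuclideanSpace ℝ (Fin m)) : ‖x‖ ≤ jap x := by
  nlinarith [jap_sq x, jap_pos x, norm_nonneg x]

lemma abs_w (ξ : EuclideanSpace ℝ (Fin m) × ℝ) : ‖w ξ‖ = japF ξ := by
  have : w ξ = Complex.mk (jap ξ.1) ξ.2 := by
    rw [w, Complex.mk_eq_add_mul_I, mul_comm]
  rw [this, Complex.norm_def, Complex.normSq_mk, japF, Real.sqrt_eq_rpow]
  congr 1
  have := jap_sq ξ.1
  nlinarith [jap_sq ξ.1]

lemma w_mem_slitPlane (ξ : EuclideanSpace ℝ (Fin m) × ℝ) : w ξ ∈ Complex.slitPlane := by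
  rw [Complex.mem_slitPlane_iff]
  left
  simp [w]
  exact lt_of_lt_of_le one_pos (one_le_jap ξ.1)

lemma norm_w_cpow (ξ : EuclideanSpace ℝ (Fin m) × ℝ) (a : ℝ) :
    ‖w ξ ^ (a : ℂ)‖ = japF ξ ^ a := by
  rw [Complex.norm_cpow_real, abs_w]

lemma coord_le_norm (x : EuclideanSpace ℝ (Fin m)) (i : Fin m) : |x i| ≤ ‖x‖ := by
  rw [EuclideanSpace.norm_eq]
  rw [← Real.sqrt_sq_eq_abs]
  apply Real.sqrt_le_sqrt
  rw [← Finset.sum_erase_add _ _ (Finset.mem_univ i)]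
  simp only [Real.norm_eq_abs]
  have : |x i| ^ 2 = x i ^ 2 := _root_.sq_abs _
  nlinarith [Finset.sum_nonneg (fun j (_ : j ∈ Finset.univ.erase i) => sq_nonneg (|x j|)), _root_.sq_abs (x i)]

lemma abs_mono_le (β : Fin m → ℕ) (x : EuclideanSpace ℝ (Fin m)) :
    |mono β x| ≤ jap x ^ ((∑ i, β i : ℕ) : ℝ) := by
  rw [Real.rpow_natCast, ← Finset.prod_pow_eq_pow_sum]
  rw [mono, Finset.abs_prod]
  apply Finset.prod_le_prod (fun i _ => abs_nonneg _)
  intro i _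
  rw [_root_.abs_pow]
  exact pow_le_pow_left₀ (abs_nonneg _) ((coord_le_norm x i).trans (norm_le_jap x)) _

lemma norm_term_le (β : Fin m → ℕ) (s a : ℝ) (ξ : EuclideanSpace ℝ (Fin m) × ℝ) :
    ‖term β s a ξ‖ ≤ jap ξ.1 ^ (((∑ i, β i : ℕ) : ℝ) + s) * japF ξ ^ a := by
  rw [term, norm_mul, norm_w_cpow, Complex.norm_real, Real.norm_eq_abs, abs_mul,
    abs_of_pos (Real.rpow_pos_of_pos (jap_pos ξ.1) s), Real.rpow_add (jap_pos ξ.1)]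
  have h1 := abs_mono_le β ξ.1
  have h2 : (0:ℝ) < japF ξ ^ a := Real.rpow_pos_of_pos (japF_pos ξ) a
  have h3 : (0:ℝ) < jap ξ.1 ^ s := Real.rpow_pos_of_pos (jap_pos ξ.1) s
  have h4 : (0:ℝ) ≤ jap ξ.1 ^ s * japF ξ ^ a := le_of_lt (mul_pos h3 h2)
  calc |mono β ξ.1| * jap ξ.1 ^ s * japF ξ ^ a
      = |mono β ξ.1| * (jap ξ.1 ^ s * japF ξ ^ a) := by ring
    _ ≤ jap ξ.1 ^ ((∑ i, β i : ℕ) : ℝ) * (jap ξ.1 ^ s * japF ξ ^ a) :=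
        mul_le_mul_of_nonneg_right h1 h4
    _ = jap ξ.1 ^ ((∑ i, β i : ℕ) : ℝ) * jap ξ.1 ^ s * japF ξ ^ a := by ring


lemma diff_prod {ι : Type*} [DecidableEq ι] (s : Finset ι)
    (f : ι → (EuclideanSpace ℝ (Fin m) × ℝ) → ℝ) (hf : ∀ i, Differentiable ℝ (f i)) :
    Differentiable ℝ (fun ξ => ∏ i ∈ s, f i ξ) := by
  induction s using Finset.induction_on with
  | empty => simpa using differentiable_const (1 : ℝ)
  | insert a s hni ih =>
    simp only [Finset.prod_insert hni]
    exact (hf _).mul ih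

lemma diff_mono (β : Fin m → ℕ) :
    Differentiable ℝ (fun ξ : EuclideanSpace ℝ (Fin m) × ℝ => mono β ξ.1) := by
  simp only [mono]
  refine diff_prod Finset.univ _ (fun i => ?_)
  have h : Differentiable ℝ (fun ξ : EuclideanSpace ℝ (Fin m) × ℝ => ξ.1 i) :=
    (EuclideanSpace.proj (𝕜 := ℝ) i).differentiable.comp differentiable_fst
  exact h.pow (β i)

lemma diff_japc :
    Differentiable ℝ (fun ξ : EuclideanSpace ℝ (Fin m) × ℝ => jap ξ.1) := by
  intro ξ
  have hbase : DifferentiableAt ℝ (fun ξ : EuclideanSpace ℝ (Fin m) × ℝ => 1 + ‖ξ.1‖ ^ 2) ξ :=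
    ((differentiable_const (1 : ℝ)).add
      (Differentiable.norm_sq (𝕜 := ℝ) differentiable_fst)).differentiableAt
  have h := (Real.differentiableAt_rpow_const_of_ne ((1:ℝ)/2)
    (x := 1 + ‖ξ.1‖ ^ 2) (by positivity)).comp ξ hbase
  exact h

lemma diff_jap_rpow (s : ℝ) :
    Differentiable ℝ (fun ξ : EuclideanSpace ℝ (Fin m) × ℝ => jap ξ.1 ^ s) := by
  intro ξ
  exact (Real.differentiableAt_rpow_const_of_ne s
    (x := jap ξ.1) (ne_of_gt (jap_pos ξ.1))).comp ξ (diff_japc ξ)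

lemma diff_w : Differentiable ℝ (w (m := m)) := by
  have h1 : Differentiable ℝ (fun ξ : EuclideanSpace ℝ (Fin m) × ℝ => ((jap ξ.1 : ℝ) : ℂ)) :=
    Complex.ofRealCLM.differentiable.comp diff_japc
  have h2 : Differentiable ℝ (fun ξ : EuclideanSpace ℝ (Fin m) × ℝ =>
      Complex.I * ((ξ.2 : ℝ) : ℂ)) :=
    (Complex.ofRealCLM.differentiable.comp differentiable_snd).const_mul Complex.I
  exact h1.add h2

lemma diff_wpow (a : ℝ) :
    Differentiable ℝ (fun ξ : EuclideanSpace ℝ (Fin m) × ℝ => w ξ ^ (a : ℂ)) := by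
  intro ξ
  exact ((Complex.hasStrictDerivAt_cpow_const
    (w_mem_slitPlane ξ)).hasDerivAt.differentiableAt.restrictScalars ℝ).comp ξ (diff_w ξ)

lemma diff_term (β : Fin m → ℕ) (s a : ℝ) : Differentiable ℝ (term β s a) := by
  have h1 : Differentiable ℝ (fun ξ : EuclideanSpace ℝ (Fin m) × ℝ =>
      ((mono β ξ.1 * jap ξ.1 ^ s : ℝ) : ℂ)) :=
    Complex.ofRealCLM.differentiable.comp ((diff_mono β).mul (diff_jap_rpow s))
  exact h1.mul (diff_wpow a)

lemma fderiv_line {F : (EuclideanSpace ℝ (Fin m) × ℝ) → ℂ}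
    {ξ : EuclideanSpace ℝ (Fin m) × ℝ} (hF : DifferentiableAt ℝ F ξ)
    (v : EuclideanSpace ℝ (Fin m) × ℝ) {D : ℂ}
    (h : HasDerivAt (fun r : ℝ => F (ξ + r • v)) D 0) : fderiv ℝ F ξ v = D := by
  have hline : HasDerivAt (fun r : ℝ => ξ + r • v) v 0 := by
    simpa using (((hasDerivAt_id (0 : ℝ)).smul_const v).const_add ξ)
  have hF' : HasFDerivAt F (fderiv ℝ F ξ) ((fun r : ℝ => ξ + r • v) 0) := by
    simpa using hF.hasFDerivAt
  have h2 := hF'.comp_hasDerivAt 0 hline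
  exact h2.unique h


lemma fderiv_term_n (β : Fin m → ℕ) (s a : ℝ) (ξ : EuclideanSpace ℝ (Fin m) × ℝ) :
    fderiv ℝ (term β s a) ξ ((0 : EuclideanSpace ℝ (Fin m)), (1 : ℝ))
      = (a : ℂ) * Complex.I * term β s (a - 1) ξ := by
  apply fderiv_line (diff_term β s a).differentiableAt
  have hpt : ∀ r : ℝ, ξ + r • ((0 : EuclideanSpace ℝ (Fin m)), (1 : ℝ)) = (ξ.1, ξ.2 + r) := by
    intro r
    apply Prod.ext <;> simp
  have h1 : HasDerivAt (fun r : ℝ => ξ.2 + r) 1 0 := (hasDerivAt_id 0).const_add ξ.2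
  have h2 : HasDerivAt (fun r : ℝ => ((ξ.2 + r : ℝ) : ℂ)) 1 0 := h1.ofReal_comp
  have h3 : HasDerivAt (fun r : ℝ => ((jap ξ.1 : ℝ) : ℂ) + Complex.I * ((ξ.2 + r : ℝ) : ℂ))
      (Complex.I * 1) 0 := (h2.const_mul Complex.I).const_add _
  have hval : ((jap ξ.1 : ℝ) : ℂ) + Complex.I * ((ξ.2 + 0 : ℝ) : ℂ) = w ξ := by
    simp [w]
  have hslit : ((jap ξ.1 : ℝ) : ℂ) + Complex.I * ((ξ.2 + (0:ℝ) : ℝ) : ℂ) ∈ Complex.slitPlane := by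
    rw [hval]; exact w_mem_slitPlane ξ
  have h4 := ((Complex.hasStrictDerivAt_cpow_const (c := (a : ℂ)) hslit).hasDerivAt).comp
    (0 : ℝ) h3
  simp only [Function.comp_def] at h4
  have h5 := h4.const_mul ((mono β ξ.1 * jap ξ.1 ^ s : ℝ) : ℂ)
  have hfun : (fun r : ℝ => term β s a (ξ + r • ((0 : EuclideanSpace ℝ (Fin m)), (1 : ℝ))))
      = fun r : ℝ => ((mono β ξ.1 * jap ξ.1 ^ s : ℝ) : ℂ) *
          ((((jap ξ.1 : ℝ) : ℂ) + Complex.I * ((ξ.2 + r : ℝ) : ℂ)) ^ (a : ℂ)) := by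
    funext r
    rw [hpt r]
    rfl
  rw [hfun]
  refine h5.congr_deriv ?_
  rw [hval, term]
  push_cast
  ring


lemma mono_split (β : Fin m → ℕ) (x : EuclideanSpace ℝ (Fin m)) (i : Fin m) (k : ℕ) :
    mono (Function.update β i k) x = x i ^ k * ∏ i' ∈ Finset.univ.erase i, x i' ^ β i' := by
  rw [mono, ← Finset.mul_prod_erase Finset.univ _ (Finset.mem_univ i)]
  congr 1
  · rw [Function.update_self]
  · exact Finset.prod_congr rfl
      (fun i' hi' => by rw [Function.update_of_ne (Finset.mem_erase.mp hi').1])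

lemma mono_self (β : Fin m → ℕ) (x : EuclideanSpace ℝ (Fin m)) (i : Fin m) :
    mono β x = x i ^ β i * ∏ i' ∈ Finset.univ.erase i, x i' ^ β i' := by
  rw [mono, ← Finset.mul_prod_erase Finset.univ _ (Finset.mem_univ i)]

lemma fderiv_term_i (β : Fin m → ℕ) (s a : ℝ) (i : Fin m)
    (ξ : EuclideanSpace ℝ (Fin m) × ℝ) :
    fderiv ℝ (term β s a) ξ ((EuclideanSpace.single i 1 : EuclideanSpace ℝ (Fin m)), (0 : ℝ))
      = ((β i : ℝ) : ℂ) * term (Function.update β i (β i - 1)) s a ξ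
        + (s : ℂ) * term (Function.update β i (β i + 1)) (s - 2) a ξ
        + (a : ℂ) * term (Function.update β i (β i + 1)) (s - 1) (a - 1) ξ := by
  apply fderiv_line (diff_term β s a).differentiableAt
  set x := ξ.1 with hx
  set e : EuclideanSpace ℝ (Fin m) := EuclideanSpace.single i 1 with he
  set ρ := x i with hρ
  set K : ℝ := ∏ i' ∈ Finset.univ.erase i, x i' ^ β i' with hK
  set u : ℝ → ℝ := fun r => (1 + ‖x‖ ^ 2) + (2 * ρ * r + r ^ 2) with hu_def
  have hpt : ∀ r : ℝ, ξ + r • (e, (0 : ℝ)) = (x + r • e, ξ.2) := by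
    intro r; apply Prod.ext <;> simp [hx]
  have hnorm : ∀ r : ℝ, 1 + ‖x + r • e‖ ^ 2 = u r := by
    intro r
    rw [hu_def]
    simp only
    rw [norm_add_sq_real, real_inner_smul_right]
    have h1 : (inner ℝ x e : ℝ) = ρ := by
      rw [he]
      simpa using EuclideanSpace.inner_single_right (𝕜 := ℝ) i 1 x
    rw [h1, norm_smul, he, EuclideanSpace.norm_single]
    simp only [Real.norm_eq_abs, norm_one, mul_one, mul_pow, _root_.sq_abs]
    ring
  have hupos : ∀ r, 0 < u r := by
    intro r; rw [← hnorm r]; positivity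
  have hjap : ∀ r : ℝ, jap (x + r • e) = u r ^ ((1 : ℝ) / 2) := by
    intro r; rw [jap, hnorm r]
  have hjaps : ∀ r q : ℝ, jap (x + r • e) ^ q = u r ^ (q / 2) := by
    intro r q
    rw [hjap r, ← Real.rpow_mul (hupos r).le]
    congr 1; ring
  have hu0 : u 0 = 1 + ‖x‖ ^ 2 := by rw [hu_def]; norm_num
  have hx0 : x + (0 : ℝ) • e = x := by simp
  have hjap0 : ∀ q : ℝ, jap x ^ q = u 0 ^ (q / 2) := by
    intro q
    conv_lhs => rw [← hx0]
    exact hjaps 0 q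
  have hjapx : jap x = u 0 ^ ((1 : ℝ) / 2) := by
    conv_lhs => rw [← hx0]
    exact hjap 0
  have hmono : ∀ r : ℝ, mono β (x + r • e) = (ρ + r) ^ β i * K := by
    intro r
    rw [mono_self β (x + r • e) i]
    have h2 : (x + r • e) i = ρ + r := by
      rw [he]; simp [EuclideanSpace.single_apply]; rfl
    have h3 : ∀ i' ∈ Finset.univ.erase i, (x + r • e) i' ^ β i' = x i' ^ β i' := by
      intro i' hi'
      have h4 : (x + r • e) i' = x i' := by
        rw [he]; simp [EuclideanSpace.single_apply, (Finset.mem_erase.mp hi').1]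
      rw [h4]
    rw [h2, Finset.prod_congr rfl h3, hK]
  have hu' : HasDerivAt u (2 * ρ) 0 := by
    have ha : HasDerivAt (fun r : ℝ => 2 * ρ * r) (2 * ρ) 0 := by
      simpa using (hasDerivAt_id (0 : ℝ)).const_mul (2 * ρ)
    have hb : HasDerivAt (fun r : ℝ => r ^ 2) 0 0 := by
      simpa using hasDerivAt_pow 2 (0 : ℝ)
    have := (ha.add hb).const_add (1 + ‖x‖ ^ 2)
    simpa [hu_def] using this
  have hmder : HasDerivAt (fun r : ℝ => (ρ + r) ^ β i * K)
      ((β i * ρ ^ (β i - 1)) * K) 0 := by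
    have := (((hasDerivAt_id (0 : ℝ)).const_add ρ).pow (β i)).mul_const K
    simpa using this
  have hjder : HasDerivAt (fun r : ℝ => u r ^ (s / 2))
      (2 * ρ * (s / 2) * u 0 ^ (s / 2 - 1)) 0 :=
    hu'.rpow_const (Or.inl (hupos 0).ne')
  have hRder := hmder.mul hjder
  have hw1 : HasDerivAt (fun r : ℝ => u r ^ ((1 : ℝ) / 2))
      (2 * ρ * ((1 : ℝ) / 2) * u 0 ^ ((1 : ℝ) / 2 - 1)) 0 :=
    hu'.rpow_const (Or.inl (hupos 0).ne')
  have hw3 : HasDerivAt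
      (fun r : ℝ => ((u r ^ ((1 : ℝ) / 2) : ℝ) : ℂ) + Complex.I * ((ξ.2 : ℝ) : ℂ))
      ((2 * ρ * ((1 : ℝ) / 2) * u 0 ^ ((1 : ℝ) / 2 - 1) : ℝ) : ℂ) 0 := by
    have := hw1.ofReal_comp (z := (0 : ℝ))
    exact this.add_const _
  have hwval : ((u 0 ^ ((1 : ℝ) / 2) : ℝ) : ℂ) + Complex.I * ((ξ.2 : ℝ) : ℂ) = w ξ := by
    rw [w, ← hjapx, hx]
  have hslit : ((u 0 ^ ((1 : ℝ) / 2) : ℝ) : ℂ) + Complex.I * ((ξ.2 : ℝ) : ℂ)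
      ∈ Complex.slitPlane := by
    rw [hwval]; exact w_mem_slitPlane ξ
  have hw4 := ((Complex.hasStrictDerivAt_cpow_const (c := (a : ℂ)) hslit).hasDerivAt).comp
    (0 : ℝ) hw3
  simp only [Function.comp_def] at hw4
  have htot := (hRder.ofReal_comp (z := (0 : ℝ))).mul hw4
  have hfun : (fun r : ℝ => term β s a (ξ + r • (e, (0 : ℝ))))
      = fun r : ℝ => (((ρ + r) ^ β i * K * u r ^ (s / 2) : ℝ) : ℂ) *
          ((((u r ^ ((1 : ℝ) / 2) : ℝ) : ℂ) + Complex.I * ((ξ.2 : ℝ) : ℂ)) ^ (a : ℂ)) := by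
    funext r
    rw [hpt r]
    show ((mono β (x + r • e) * jap (x + r • e) ^ s : ℝ) : ℂ)
        * w (x + r • e, ξ.2) ^ (a : ℂ) = _
    rw [hmono r, hjaps r s]
    have : w (x + r • e, ξ.2) = ((u r ^ ((1 : ℝ) / 2) : ℝ) : ℂ) + Complex.I * ((ξ.2 : ℝ) : ℂ) := by
      rw [w]
      show ((jap (x + r • e) : ℝ) : ℂ) + _ = _
      rw [hjap r]
    rw [this]
  rw [hfun]
  refine htot.congr_deriv ?_
  rw [hwval]
  simp only [term, mono_split]
  rw [← hx, ← hK, ← hρ, hjap0 s, hjap0 (s - 2), hjap0 (s - 1)]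
  rw [show ((s - 2) / 2 : ℝ) = s / 2 - 1 by ring,
    show ((s - 1) / 2 : ℝ) = s / 2 + ((1 : ℝ) / 2 - 1) by ring,
    Real.rpow_add (hupos 0)]
  simp only [Pi.mul_apply]
  push_cast
  ring


inductive Good (m : ℕ) (t : ℝ) : ℕ → ℕ → ((EuclideanSpace ℝ (Fin m) × ℝ) → ℂ) → Prop
  | zero (n j : ℕ) : Good m t n j (fun _ => 0)
  | base (j : ℕ) (c : ℂ) : Good m t 0 j (fun ξ => c * term (fun _ => 0) 0 (t - (j : ℝ)) ξ)
  | tm (n j : ℕ) (c : ℂ) (β : Fin m → ℕ) (s : ℝ) (k : ℕ) (hk : 1 ≤ k)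
      (hβ : ((∑ i, β i : ℕ) : ℝ) + s = (k : ℝ) - (n : ℝ)) :
      Good m t n j (fun ξ => c * term β s (t - (j : ℝ) - (k : ℝ)) ξ)
  | add {n j : ℕ} {F G : (EuclideanSpace ℝ (Fin m) × ℝ) → ℂ} :
      Good m t n j F → Good m t n j G → Good m t n j (fun ξ => F ξ + G ξ)

theorem Good.congr {t : ℝ} {n j : ℕ} {F G : (EuclideanSpace ℝ (Fin m) × ℝ) → ℂ}
    (h : Good m t n j F) (e : ∀ ξ, F ξ = G ξ) : Good m t n j G :=
  (funext e : F = G) ▸ h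

theorem Good.diff {t : ℝ} {n j : ℕ} {F : (EuclideanSpace ℝ (Fin m) × ℝ) → ℂ}
    (h : Good m t n j F) : Differentiable ℝ F := by
  induction h with
  | zero n j => exact differentiable_const 0
  | base j c => exact (diff_term _ _ _).const_mul c
  | tm n j c β s k hk hβ => exact (diff_term _ _ _).const_mul c
  | add hF hG ihF ihG => exact ihF.add ihG

theorem Good.dn {t : ℝ} {n j : ℕ} {F : (EuclideanSpace ℝ (Fin m) × ℝ) → ℂ}
    (h : Good m t n j F) :
    Good m t n (j + 1)
      (fun ξ => fderiv ℝ F ξ ((0 : EuclideanSpace ℝ (Fin m)), (1 : ℝ))) := by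
  induction h with
  | zero n j =>
    refine (Good.zero n (j + 1)).congr (fun ξ => ?_)
    simp
  | base j c =>
    refine (Good.base (j + 1) (c * ((t - (j : ℝ) : ℝ) : ℂ) * Complex.I)).congr (fun ξ => ?_)
    rw [fderiv_const_mul (diff_term _ _ _).differentiableAt c,
      ContinuousLinearMap.smul_apply, fderiv_term_n, smul_eq_mul]
    rw [show t - ((j + 1 : ℕ) : ℝ) = t - (j : ℝ) - 1 by push_cast; ring]
    push_cast
    ring
  | tm n j c β s k hk hβ =>
    refine (Good.tm n (j + 1) (c * ((t - (j : ℝ) - (k : ℝ) : ℝ) : ℂ) * Complex.I)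
      β s k hk hβ).congr (fun ξ => ?_)
    rw [fderiv_const_mul (diff_term _ _ _).differentiableAt c,
      ContinuousLinearMap.smul_apply, fderiv_term_n, smul_eq_mul]
    rw [show t - ((j + 1 : ℕ) : ℝ) - (k : ℝ) = t - (j : ℝ) - (k : ℝ) - 1 by push_cast; ring]
    push_cast
    ring
  | add hF hG ihF ihG =>
    refine (ihF.add ihG).congr (fun ξ => ?_)
    rw [fderiv_fun_add (hF.diff _) (hG.diff _), ContinuousLinearMap.add_apply]


theorem Good.di {t : ℝ} {n j : ℕ} {F : (EuclideanSpace ℝ (Fin m) × ℝ) → ℂ} (i : Fin m)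
    (h : Good m t n j F) :
    Good m t (n + 1) j
      (fun ξ => fderiv ℝ F ξ
        ((EuclideanSpace.single i 1 : EuclideanSpace ℝ (Fin m)), (0 : ℝ))) := by
  induction h with
  | zero n j =>
    refine (Good.zero (n + 1) j).congr (fun ξ => ?_)
    simp
  | base j c =>
    have hβ : ((∑ i', Function.update (fun _ : Fin m => 0) i 1 i' : ℕ) : ℝ) + (0 - 1 : ℝ)
        = ((1 : ℕ) : ℝ) - ((0 + 1 : ℕ) : ℝ) := by
      rw [Finset.sum_update_of_mem (Finset.mem_univ i)]
      simp
    refine (Good.tm (0 + 1) j (c * ((t - (j : ℝ) : ℝ) : ℂ))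
      (Function.update (fun _ : Fin m => 0) i 1) (0 - 1) 1 le_rfl hβ).congr (fun ξ => ?_)
    rw [fderiv_const_mul (diff_term _ _ _).differentiableAt c,
      ContinuousLinearMap.smul_apply, fderiv_term_i, smul_eq_mul]
    rw [show t - (j : ℝ) - ((1 : ℕ) : ℝ) = t - (j : ℝ) - 1 by push_cast; ring]
    norm_num
    ring
  | tm n j c β s k hk hβ =>
    have hsum1 : ∑ i', β i' = β i + ∑ i' ∈ Finset.univ.erase i, β i' :=
      (Finset.add_sum_erase _ β (Finset.mem_univ i)).symm
    have g2 : Good m t (n + 1) j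
        (fun ξ => (c * (s : ℂ)) * term (Function.update β i (β i + 1)) (s - 2)
          (t - (j : ℝ) - (k : ℝ)) ξ) := by
      refine Good.tm (n + 1) j _ _ _ k hk ?_
      rw [Finset.sum_update_of_mem (Finset.mem_univ i)]
      push_cast [hsum1] at hβ ⊢
      simp only [Finset.erase_eq] at hβ ⊢
      linarith
    have g3 : Good m t (n + 1) j
        (fun ξ => (c * ((t - (j : ℝ) - (k : ℝ) : ℝ) : ℂ)) *
          term (Function.update β i (β i + 1)) (s - 1) (t - (j : ℝ) - ((k + 1 : ℕ) : ℝ)) ξ) :=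
      by
      refine Good.tm (n + 1) j _ _ _ (k + 1) (by omega) ?_
      rw [Finset.sum_update_of_mem (Finset.mem_univ i)]
      push_cast [hsum1] at hβ ⊢
      simp only [Finset.erase_eq] at hβ ⊢
      linarith
    have g1 : Good m t (n + 1) j
        (fun ξ => (c * ((β i : ℝ) : ℂ)) * term (Function.update β i (β i - 1)) s
          (t - (j : ℝ) - (k : ℝ)) ξ) := by
      by_cases hb : β i = 0
      · refine (Good.zero (n + 1) j).congr (fun ξ => ?_)
        simp [hb]
      · refine Good.tm (n + 1) j _ _ _ k hk ?_
        rw [Finset.sum_update_of_mem (Finset.mem_univ i)]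
        have hb1 : (1 : ℕ) ≤ β i := Nat.one_le_iff_ne_zero.mpr hb
        push_cast [hsum1, Nat.cast_sub hb1] at hβ ⊢
        simp only [Finset.erase_eq] at hβ ⊢
        linarith
    refine ((g1.add g2).add g3).congr (fun ξ => ?_)
    rw [fderiv_const_mul (diff_term _ _ _).differentiableAt c,
      ContinuousLinearMap.smul_apply, fderiv_term_i, smul_eq_mul]
    rw [show t - (j : ℝ) - ((k + 1 : ℕ) : ℝ) = t - (j : ℝ) - (k : ℝ) - 1 by push_cast; ring]
    ring
  | add hF hG ihF ihG =>
    refine (ihF.add ihG).congr (fun ξ => ?_)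
    rw [fderiv_fun_add (hF.diff _) (hG.diff _), ContinuousLinearMap.add_apply]


lemma rhs_pos (p q : ℝ) (ξ : EuclideanSpace ℝ (Fin m) × ℝ) :
    0 < (jap ξ.1 ^ p + japF ξ ^ p) * japF ξ ^ q :=
  mul_pos (add_pos (Real.rpow_pos_of_pos (jap_pos _) _) (Real.rpow_pos_of_pos (japF_pos _) _))
    (Real.rpow_pos_of_pos (japF_pos _) _)

lemma key_est (t : ℝ) (n j k : ℕ) (s : ℝ) (β : Fin m → ℕ)
    (hβ : ((∑ i, β i : ℕ) : ℝ) + s = (k : ℝ) - (n : ℝ)) (hk : 1 ≤ k)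
    (ξ : EuclideanSpace ℝ (Fin m) × ℝ) :
    ‖term β s (t - (j : ℝ) - (k : ℝ)) ξ‖
      ≤ (jap ξ.1 ^ (1 - (n : ℝ)) + japF ξ ^ (1 - (n : ℝ))) * japF ξ ^ (t - 1 - (j : ℝ)) := by
  have hJ : 0 < jap ξ.1 := jap_pos ξ.1
  have hJF : 0 < japF ξ := japF_pos ξ
  have step1 : ‖term β s (t - (j : ℝ) - (k : ℝ)) ξ‖
      ≤ jap ξ.1 ^ ((k : ℝ) - (n : ℝ)) * japF ξ ^ (t - (j : ℝ) - (k : ℝ)) := by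
    have h := norm_term_le β s (t - (j : ℝ) - (k : ℝ)) ξ
    rwa [hβ] at h
  have e1 : jap ξ.1 ^ ((k : ℝ) - (n : ℝ))
      = jap ξ.1 ^ (1 - (n : ℝ)) * jap ξ.1 ^ ((k : ℝ) - 1) := by
    rw [← Real.rpow_add hJ]; congr 1; ring
  have e2 : japF ξ ^ (t - (j : ℝ) - (k : ℝ))
      = japF ξ ^ ((1 : ℝ) - (k : ℝ)) * japF ξ ^ (t - 1 - (j : ℝ)) := by
    rw [← Real.rpow_add hJF]; congr 1; ring
  have e3 : japF ξ ^ ((1 : ℝ) - (k : ℝ)) ≤ jap ξ.1 ^ ((1 : ℝ) - (k : ℝ)) := by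
    refine Real.rpow_le_rpow_of_nonpos hJ (jap_le_japF ξ) ?_
    have : (1 : ℝ) ≤ (k : ℝ) := by exact_mod_cast hk
    linarith
  have e4 : jap ξ.1 ^ ((k : ℝ) - 1) * jap ξ.1 ^ ((1 : ℝ) - (k : ℝ)) = 1 := by
    rw [← Real.rpow_add hJ, show (k : ℝ) - 1 + (1 - (k : ℝ)) = 0 by ring, Real.rpow_zero]
  calc ‖term β s (t - (j : ℝ) - (k : ℝ)) ξ‖
      ≤ jap ξ.1 ^ ((k : ℝ) - (n : ℝ)) * japF ξ ^ (t - (j : ℝ) - (k : ℝ)) := step1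
    _ = (jap ξ.1 ^ (1 - (n : ℝ)) * japF ξ ^ (t - 1 - (j : ℝ)))
        * (jap ξ.1 ^ ((k : ℝ) - 1) * japF ξ ^ ((1 : ℝ) - (k : ℝ))) := by
        rw [e1, e2]; ring
    _ ≤ (jap ξ.1 ^ (1 - (n : ℝ)) * japF ξ ^ (t - 1 - (j : ℝ)))
        * (jap ξ.1 ^ ((k : ℝ) - 1) * jap ξ.1 ^ ((1 : ℝ) - (k : ℝ))) := by
        refine mul_le_mul_of_nonneg_left (mul_le_mul_of_nonneg_left e3 ?_) ?_
        · exact (Real.rpow_pos_of_pos hJ _).le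
        · exact (mul_pos (Real.rpow_pos_of_pos hJ _) (Real.rpow_pos_of_pos hJF _)).le
    _ = jap ξ.1 ^ (1 - (n : ℝ)) * japF ξ ^ (t - 1 - (j : ℝ)) := by rw [e4, mul_one]
    _ ≤ (jap ξ.1 ^ (1 - (n : ℝ)) + japF ξ ^ (1 - (n : ℝ))) * japF ξ ^ (t - 1 - (j : ℝ)) := by
        refine mul_le_mul_of_nonneg_right ?_ (Real.rpow_pos_of_pos hJF _).le
        exact le_add_of_nonneg_right (Real.rpow_pos_of_pos hJF _).le

theorem Good.bound {t : ℝ} {n j : ℕ} {F : (EuclideanSpace ℝ (Fin m) × ℝ) → ℂ}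
    (h : Good m t n j F) :
    ∃ C : ℝ, 0 < C ∧ ∀ ξ, ‖F ξ‖
      ≤ C * ((jap ξ.1 ^ (1 - (n : ℝ)) + japF ξ ^ (1 - (n : ℝ))) * japF ξ ^ (t - 1 - (j : ℝ))) := by
  induction h with
  | zero n j =>
    exact ⟨1, one_pos, fun ξ => by
      simp only [norm_zero, one_mul]
      exact (rhs_pos _ _ ξ).le⟩
  | base j c =>
    refine ⟨‖c‖ + 1, by positivity, fun ξ => ?_⟩
    have hJF := japF_pos ξ
    have h1 : ‖c * term (fun _ => 0) 0 (t - (j : ℝ)) ξ‖ ≤ ‖c‖ * japF ξ ^ (t - (j : ℝ)) := by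
      rw [norm_mul]
      refine mul_le_mul_of_nonneg_left ?_ (norm_nonneg c)
      have h := norm_term_le (fun _ => 0) 0 (t - (j : ℝ)) ξ
      simpa using h
    have h2 : japF ξ ^ (t - (j : ℝ))
        = japF ξ ^ (1 : ℝ) * japF ξ ^ (t - 1 - (j : ℝ)) := by
      rw [← Real.rpow_add hJF]; congr 1; ring
    have h3 : japF ξ ^ (1 : ℝ) ≤ jap ξ.1 ^ (1 - ((0 : ℕ) : ℝ)) + japF ξ ^ (1 - ((0 : ℕ) : ℝ)) := by
      simp only [Nat.cast_zero, sub_zero]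
      exact le_add_of_nonneg_left (Real.rpow_pos_of_pos (jap_pos _) _).le
    calc ‖c * term (fun _ => 0) 0 (t - (j : ℝ)) ξ‖
        ≤ ‖c‖ * japF ξ ^ (t - (j : ℝ)) := h1
      _ = ‖c‖ * (japF ξ ^ (1 : ℝ) * japF ξ ^ (t - 1 - (j : ℝ))) := by rw [h2]
      _ ≤ ‖c‖ * ((jap ξ.1 ^ (1 - ((0 : ℕ) : ℝ)) + japF ξ ^ (1 - ((0 : ℕ) : ℝ)))
            * japF ξ ^ (t - 1 - (j : ℝ))) := by
          refine mul_le_mul_of_nonneg_left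
            (mul_le_mul_of_nonneg_right h3 (Real.rpow_pos_of_pos hJF _).le) (norm_nonneg c)
      _ ≤ (‖c‖ + 1) * ((jap ξ.1 ^ (1 - ((0 : ℕ) : ℝ)) + japF ξ ^ (1 - ((0 : ℕ) : ℝ)))
            * japF ξ ^ (t - 1 - (j : ℝ))) := by
          refine mul_le_mul_of_nonneg_right (by linarith) (rhs_pos _ _ ξ).le
  | tm n j c β s k hk hβ =>
    refine ⟨‖c‖ + 1, by positivity, fun ξ => ?_⟩
    have h1 := key_est t n j k s β hβ hk ξ
    calc ‖c * term β s (t - (j : ℝ) - (k : ℝ)) ξ‖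
        = ‖c‖ * ‖term β s (t - (j : ℝ) - (k : ℝ)) ξ‖ := norm_mul _ _
      _ ≤ ‖c‖ * ((jap ξ.1 ^ (1 - (n : ℝ)) + japF ξ ^ (1 - (n : ℝ)))
            * japF ξ ^ (t - 1 - (j : ℝ))) :=
          mul_le_mul_of_nonneg_left h1 (norm_nonneg c)
      _ ≤ (‖c‖ + 1) * ((jap ξ.1 ^ (1 - (n : ℝ)) + japF ξ ^ (1 - (n : ℝ)))
            * japF ξ ^ (t - 1 - (j : ℝ))) :=
          mul_le_mul_of_nonneg_right (by linarith [norm_nonneg c]) (rhs_pos _ _ ξ).le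
  | add hF hG ihF ihG =>
    obtain ⟨C1, hC1, hB1⟩ := ihF
    obtain ⟨C2, hC2, hB2⟩ := ihG
    refine ⟨C1 + C2, by positivity, fun ξ => ?_⟩
    calc ‖_ + _‖ ≤ ‖_‖ + ‖_‖ := norm_add_le _ _
      _ ≤ C1 * _ + C2 * _ := add_le_add (hB1 ξ) (hB2 ξ)
      _ = (C1 + C2) * _ := by ring


lemma dLine_cons {E F : Type*} [NormedAddCommGroup E] [NormedSpace ℝ E]
    [NormedAddCommGroup F] [NormedSpace ℝ F] (v : E) (L : List E) (f : E → F) :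
    dLine (v :: L) f = fun x => fderiv ℝ (dLine L f) x v := rfl

lemma dLine_append {E F : Type*} [NormedAddCommGroup E] [NormedSpace ℝ E]
    [NormedAddCommGroup F] [NormedSpace ℝ F] (L₁ L₂ : List E) (f : E → F) :
    dLine (L₁ ++ L₂) f = dLine L₁ (dLine L₂ f) := by
  induction L₁ with
  | nil => rfl
  | cons v L ih => simp [dLine_cons, ih]

end Stmt19

/-- The order-reducing symbol `χ_+^t(ξ) = (⟨ξ'⟩+iξ_n)^t` (principal power) on
`ℝⁿ = ℝ^{n-1}×ℝ` (`n = m+1 ≥ 2`) satisfies the anisotropic estimates with `d = 1`,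
order `m = t`, regularity number `ν = 1`:
`|∂_{ξ'}^{α'} ∂_{ξ_n}^{α_n} χ_+^t| ≤ C_α (⟨ξ'⟩^{1-|α'|} + ⟨ξ⟩^{1-|α'|}) ⟨ξ⟩^{t-1-α_n}`.
The `ξ'`-multi-index `α'` is encoded as a list `A` of coordinate directions
(`|α'| = A.length`), and `j = α_n` is the number of `ξ_n`-derivatives. -/
theorem stmt_19 {m : ℕ} (hm : 1 ≤ m) (t : ℝ) (A : List (Fin m)) (j : ℕ) :
    ∃ C : ℝ, 0 < C ∧ ∀ ξ : EuclideanSpace ℝ (Fin m) × ℝ,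
      ‖dLine
          (A.map (fun i => ((EuclideanSpace.single i 1 : EuclideanSpace ℝ (Fin m)), (0 : ℝ)))
            ++ List.replicate j ((0 : EuclideanSpace ℝ (Fin m)), (1 : ℝ)))
          (fun η : EuclideanSpace ℝ (Fin m) × ℝ =>
            (((jap η.1 : ℝ) : ℂ) + Complex.I * (η.2 : ℂ)) ^ (t : ℂ))
          ξ‖
        ≤ C * ((jap ξ.1 ^ (1 - (A.length : ℝ)) + japF ξ ^ (1 - (A.length : ℝ)))
            * japF ξ ^ (t - 1 - (j : ℝ))) := by
  classical
  set F₀ : (EuclideanSpace ℝ (Fin m) × ℝ) → ℂ := fun η =>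
    (((jap η.1 : ℝ) : ℂ) + Complex.I * (η.2 : ℂ)) ^ (t : ℂ) with hF₀
  have h0 : ∀ j' : ℕ, Stmt19.Good m t 0 j'
      (dLine (List.replicate j' ((0 : EuclideanSpace ℝ (Fin m)), (1 : ℝ))) F₀) := by
    intro j'
    induction j' with
    | zero =>
      refine (Stmt19.Good.base 0 1).congr (fun ξ => ?_)
      show (1 : ℂ) * Stmt19.term (fun _ => 0) 0 (t - ((0 : ℕ) : ℝ)) ξ = F₀ ξ
      rw [Stmt19.term, Stmt19.mono, hF₀]
      simp [Stmt19.w, Real.rpow_zero]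
    | succ j' ih =>
      rw [List.replicate_succ, Stmt19.dLine_cons]
      exact ih.dn
  have h1 : Stmt19.Good m t A.length j
      (dLine (A.map (fun i => ((EuclideanSpace.single i 1 : EuclideanSpace ℝ (Fin m)), (0 : ℝ)))
        ++ List.replicate j ((0 : EuclideanSpace ℝ (Fin m)), (1 : ℝ))) F₀) := by
    rw [Stmt19.dLine_append]
    induction A with
    | nil => exact h0 j
    | cons i A' ih =>
      rw [List.map_cons, Stmt19.dLine_cons]
      exact ih.di i
  obtain ⟨C, hC, hB⟩ := h1.bound
  exact ⟨C, hC, hB⟩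
end
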